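/- arXiv:2211.11497 — 9 statements merged into one kernel-verified Lean document; each statement's English description precedes it below -/
import Mathlib

section
/- Let F be the set of ordered pairs of reduced fractions ((p,q),(k,m)) with integers 0 ≤ p ≤ q, 0 ≤ k ≤ m, q ≥ 1, m ≥ 1, gcd(p,q) = 1, gcd(k,m) = 1, and |p·m − q·k| = 1. For a real number r, the family ((q·m)^(−r)) indexed by F is summable if and only if r > 1. Equivalently, since |p/q − k/m| = 1/(qm) for such pairs, the sum of the r-th powers of the lengths of the Farey intervals in [0,1] converges if and only if r > 1. -/
/-- The set of ordered pairs of reduced fractions `((p,q),(k,m))` with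
`0 ≤ p ≤ q`, `0 ≤ k ≤ m`, `q ≥ 1`, `m ≥ 1`, `gcd(p,q) = gcd(k,m) = 1` and `|p·m − q·k| = 1`
(Farey neighbors in `[0,1]`). -/
def fareyPairs : Set ((ℤ × ℤ) × (ℤ × ℤ)) :=
  {x | 0 ≤ x.1.1 ∧ x.1.1 ≤ x.1.2 ∧ 0 ≤ x.2.1 ∧ x.2.1 ≤ x.2.2 ∧
    1 ≤ x.1.2 ∧ 1 ≤ x.2.2 ∧ Int.gcd x.1.1 x.1.2 = 1 ∧ Int.gcd x.2.1 x.2.2 = 1 ∧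
    |x.1.1 * x.2.2 - x.1.2 * x.2.1| = 1}

/-- The encoding map `((p,q),(k,m)) ↦ (sign of pm-qk, (q-1, m-1))`. -/
private def fareyEnc (x : fareyPairs) : Bool × ℕ × ℕ :=
  ⟨decide (0 ≤ x.val.1.1 * x.val.2.2 - x.val.1.2 * x.val.2.1),
    (x.val.1.2 - 1).toNat, (x.val.2.2 - 1).toNat⟩

private lemma fareyEnc_injective : Function.Injective fareyEnc := by
  rintro ⟨⟨⟨p, q⟩, ⟨k, m⟩⟩, hx⟩ ⟨⟨⟨p', q'⟩, ⟨k', m'⟩⟩, hy⟩ h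
  obtain ⟨hp0, hpq, hk0, hkm, hq1, hm1, hgp, hgk, habs⟩ := hx
  obtain ⟨hp0', hpq', hk0', hkm', hq1', hm1', hgp', hgk', habs'⟩ := hy
  dsimp only at hp0 hpq hk0 hkm hq1 hm1 hgp hgk habs
  dsimp only at hp0' hpq' hk0' hkm' hq1' hm1' hgp' hgk' habs'
  simp only [fareyEnc, Prod.mk.injEq] at h
  obtain ⟨hb, hqe, hme⟩ := h
  -- recover equality of denominators
  have hq : q = q' := by omega
  have hm : m = m' := by omega
  subst hq; subst hm
  -- the two determinants are equal
  rw [decide_eq_decide] at hb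
  have he1 : p * m - q * k = 1 ∨ p * m - q * k = -1 := abs_eq (by norm_num) |>.mp habs
  have he2 : p' * m - q * k' = 1 ∨ p' * m - q * k' = -1 := abs_eq (by norm_num) |>.mp habs'
  have hee : p * m - q * k = p' * m - q * k' := by omega
  -- q and m are coprime
  have hco : IsCoprime q m := by
    rcases he1 with h1 | h1
    · exact ⟨-k, p, by linarith⟩
    · exact ⟨k, -p, by linarith⟩
  -- hence q divides p - p'
  have hdvd : q ∣ (p - p') * m := ⟨k - k', by linear_combination hee⟩
  have hdvd' : q ∣ p - p' := hco.dvd_of_dvd_mul_right hdvd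
  obtain ⟨t, ht⟩ := hdvd'
  have hkk : k - k' = t * m := by
    have hmain : q * (t * m) = q * (k - k') := by
      have h2 : (p - p') * m = q * (k - k') := by linear_combination hee
      calc q * (t * m) = (q * t) * m := by ring
        _ = (p - p') * m := by rw [← ht]
        _ = q * (k - k') := h2
    exact (mul_left_cancel₀ (by omega) hmain).symm
  -- |t| ≤ 1
  have ht1 : t = -1 ∨ t = 0 ∨ t = 1 := by
    rcases lt_trichotomy t 0 with hlt | hlt | hlt
    · left
      by_contra hne
      have h2 : t ≤ -2 := by omega
      have hqt : q * t ≤ q * (-2) := mul_le_mul_of_nonneg_left h2 (by omega)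
      have : p - p' = q * t := by linarith [ht]
      linarith
    · right; left; exact hlt
    · right; right
      by_contra hne
      have h2 : 2 ≤ t := by omega
      have hqt : q * 2 ≤ q * t := mul_le_mul_of_nonneg_left h2 (by omega)
      linarith [ht]
  rcases ht1 with rfl | rfl | rfl
  · exfalso
    have hp : p = 0 ∧ p' = q := by omega
    have hk : k = 0 ∧ k' = m := by omega
    obtain ⟨rfl, rfl⟩ := hp
    obtain ⟨rfl, rfl⟩ := hk
    rcases he1 with h1 | h1 <;> simp at h1
  · have hpk : p = p' ∧ k = k' := by omega
    simp [hpk.1, hpk.2]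
  · exfalso
    have hp : p' = 0 ∧ p = q := by omega
    have hk : k' = 0 ∧ k = m := by omega
    obtain ⟨rfl, rfl⟩ := hp
    obtain ⟨rfl, rfl⟩ := hk
    rcases he2 with h1 | h1 <;> simp at h1

/-- **Summability of Farey lengths.**
The family `(q·m)^(−r)` indexed by pairs of Farey neighbors in `[0,1]` is summable
if and only if `r > 1`. -/
theorem farey_lengths_summable_iff (r : ℝ) :
    Summable (fun x : fareyPairs => ((x.val.1.2 * x.val.2.2 : ℤ) : ℝ) ^ (-r)) ↔ 1 < r := by
  constructor
  · -- summable ⇒ r > 1, by restricting to the pairs ((0,1),(1,m))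
    intro hs
    have hmem : ∀ n : ℕ, (((0 : ℤ), (1 : ℤ)), ((1 : ℤ), (n : ℤ) + 1)) ∈ fareyPairs := by
      intro n
      refine ⟨by norm_num, by norm_num, by norm_num, ?_, by norm_num, ?_, by simp, ?_, by norm_num⟩
      · show (1 : ℤ) ≤ (n : ℤ) + 1; omega
      · show (1 : ℤ) ≤ (n : ℤ) + 1; omega
      · simp [Int.gcd]
    have hinj : Function.Injective
        (fun n : ℕ => (⟨_, hmem n⟩ : fareyPairs)) := by
      intro a b hab
      have := congrArg (fun x : fareyPairs => x.val.2.2) hab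
      simp only at this
      omega
    have hcomp := hs.comp_injective hinj
    have hcomp' : Summable (fun n : ℕ => ((n : ℝ) + 1) ^ (-r)) := by
      refine hcomp.congr fun n => ?_
      show (((1 * ((n : ℤ) + 1) : ℤ)) : ℝ) ^ (-r) = _
      push_cast
      ring_nf
    have hsum : Summable (fun n : ℕ => (n : ℝ) ^ (-r)) := by
      rw [← summable_nat_add_iff 1]
      refine hcomp'.congr fun n => ?_
      push_cast
      ring_nf
    have := Real.summable_nat_rpow.mp hsum
    linarith
  · -- r > 1 ⇒ summable, via the injective encoding
    intro hr
    have hone : Summable (fun n : ℕ => ((n : ℝ) + 1) ^ (-r)) := by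
      have h := (summable_nat_add_iff (f := fun n : ℕ => (n : ℝ) ^ (-r)) 1).mpr
        (Real.summable_nat_rpow.mpr (by linarith))
      refine h.congr fun n => ?_
      push_cast
      ring_nf
    have hprod : Summable (fun y : ℕ × ℕ => ((y.1 : ℝ) + 1) ^ (-r) * ((y.2 : ℝ) + 1) ^ (-r)) :=
      hone.mul_of_nonneg hone (fun n => Real.rpow_nonneg (by positivity) _)
        (fun n => Real.rpow_nonneg (by positivity) _)
    have hgs : Summable (fun y : Bool × ℕ × ℕ =>
        ((y.2.1 : ℝ) + 1) ^ (-r) * ((y.2.2 : ℝ) + 1) ^ (-r)) := by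
      refine (summable_prod_of_nonneg fun y => ?_).mpr ⟨fun b => hprod, ?_⟩
      · exact mul_nonneg (Real.rpow_nonneg (by positivity) _) (Real.rpow_nonneg (by positivity) _)
      · exact Summable.of_finite
    have hfin := hgs.comp_injective fareyEnc_injective
    refine hfin.congr fun x => ?_
    obtain ⟨⟨⟨p, q⟩, ⟨k, m⟩⟩, hx⟩ := x
    obtain ⟨hp0, hpq, hk0, hkm, hq1, hm1, hgp, hgk, habs⟩ := hx
    dsimp only at hp0 hpq hk0 hkm hq1 hm1 hgp hgk habs
    show (((q - 1).toNat : ℝ) + 1) ^ (-r) * (((m - 1).toNat : ℝ) + 1) ^ (-r) = _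
    have h1 : ((q - 1).toNat : ℝ) + 1 = (q : ℝ) := by
      have h := Int.toNat_of_nonneg (show (0:ℤ) ≤ q - 1 by omega)
      have h' : (((q - 1).toNat : ℤ) : ℝ) = (q : ℝ) - 1 := by rw [h]; push_cast; ring
      rw [Int.cast_natCast] at h'
      rw [h']; ring
    have h2 : ((m - 1).toNat : ℝ) + 1 = (m : ℝ) := by
      have h := Int.toNat_of_nonneg (show (0:ℤ) ≤ m - 1 by omega)
      have h' : (((m - 1).toNat : ℤ) : ℝ) = (m : ℝ) - 1 := by rw [h]; push_cast; ring
      rw [Int.cast_natCast] at h'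
      rw [h']; ring
    have hq0 : (0:ℝ) ≤ (q : ℝ) := by exact_mod_cast (show (0:ℤ) ≤ q by omega)
    have hm0 : (0:ℝ) ≤ (m : ℝ) := by exact_mod_cast (show (0:ℤ) ≤ m by omega)
    rw [h1, h2, ← Real.mul_rpow hq0 hm0]
    norm_cast
end

section
/- Let a < b be real numbers, let φ : ℝ → ℝ be continuous on [a,b] and differentiable on [a,b] with φ'(t) > 0 for all t ∈ [a,b], and suppose there exist constants C > 0 and α ∈ (0,1] such that |log φ'(s) − log φ'(t)| ≤ C·|s − t|^α for all s, t ∈ [a,b]. Then |(1/2)·(log φ'(a) + log φ'(b)) − log((φ(b) − φ(a))/(b − a))| ≤ C·(b − a)^α. -/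
/-- **Hölder estimate for the diamond shear.**
If `φ` is continuous on `[a,b]`, differentiable on `[a,b]` with positive derivative `φ'`,
and `log φ'` is `α`-Hölder on `[a,b]` with constant `C`, then
`|(1/2)(log φ'(a) + log φ'(b)) − log((φ(b) − φ(a))/(b − a))| ≤ C (b − a)^α`. -/
theorem diamond_shear_holder_bound (a b : ℝ) (hab : a < b) (φ φ' : ℝ → ℝ) (C α : ℝ)
    (hC : 0 < C) (hα : α ∈ Set.Ioc (0 : ℝ) 1)
    (hcont : ContinuousOn φ (Set.Icc a b))
    (hderiv : ∀ t ∈ Set.Icc a b, HasDerivWithinAt φ (φ' t) (Set.Icc a b) t)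
    (hpos : ∀ t ∈ Set.Icc a b, 0 < φ' t)
    (hHolder : ∀ s ∈ Set.Icc a b, ∀ t ∈ Set.Icc a b,
      |Real.log (φ' s) - Real.log (φ' t)| ≤ C * |s - t| ^ α) :
    |(1 / 2) * (Real.log (φ' a) + Real.log (φ' b)) - Real.log ((φ b - φ a) / (b - a))|
      ≤ C * (b - a) ^ α := by
  obtain ⟨c, hc, hceq⟩ := exists_hasDerivAt_eq_slope φ φ' hab hcont (fun x hx => by
    have hx' : x ∈ Set.Icc a b := Set.mem_Icc_of_Ioo hx
    exact (hderiv x hx').hasDerivAt (Icc_mem_nhds hx.1 hx.2))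
  have hcIcc : c ∈ Set.Icc a b := Set.mem_Icc_of_Ioo hc
  have hslope : Real.log ((φ b - φ a) / (b - a)) = Real.log (φ' c) := by
    rw [hceq]
  rw [hslope]
  have haI : a ∈ Set.Icc a b := Set.left_mem_Icc.2 hab.le
  have hbI : b ∈ Set.Icc a b := Set.right_mem_Icc.2 hab.le
  have h1 := hHolder a haI c hcIcc
  have h2 := hHolder b hbI c hcIcc
  have hba : (0:ℝ) < b - a := by linarith [hab]
  have hmono1 : |a - c| ^ α ≤ (b - a) ^ α := by
    apply Real.rpow_le_rpow (abs_nonneg _) _ hα.1.le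
    rw [abs_sub_comm, abs_of_pos (by linarith [hc.1] : (0:ℝ) < c - a)]
    linarith [hc.2]
  have hmono2 : |b - c| ^ α ≤ (b - a) ^ α := by
    apply Real.rpow_le_rpow (abs_nonneg _) _ hα.1.le
    rw [abs_of_pos (by linarith [hc.2] : (0:ℝ) < b - c)]
    linarith [hc.1]
  have e1 : C * |a - c| ^ α ≤ C * (b - a) ^ α := by nlinarith
  have e2 : C * |b - c| ^ α ≤ C * (b - a) ^ α := by nlinarith
  have key : |(1 / 2) * (Real.log (φ' a) + Real.log (φ' b)) - Real.log (φ' c)|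
      ≤ (1/2) * |Real.log (φ' a) - Real.log (φ' c)| + (1/2) * |Real.log (φ' b) - Real.log (φ' c)| := by
    have : (1 / 2) * (Real.log (φ' a) + Real.log (φ' b)) - Real.log (φ' c)
        = (1/2) * (Real.log (φ' a) - Real.log (φ' c)) + (1/2) * (Real.log (φ' b) - Real.log (φ' c)) := by ring
    rw [this]
    calc _ ≤ |(1/2) * (Real.log (φ' a) - Real.log (φ' c))| + |(1/2) * (Real.log (φ' b) - Real.log (φ' c))| := abs_add_le _ _
    _ = (1/2) * |Real.log (φ' a) - Real.log (φ' c)| + (1/2) * |Real.log (φ' b) - Real.log (φ' c)| := by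
        have h12 : |(1/2:ℝ)| = 1/2 := abs_of_pos (by norm_num)
        rw [abs_mul, abs_mul, h12]
  linarith [key, h1, h2, e1, e2]
end

section
/- For any a, b ∈ ℂ with |a| = |b| = 1, the integral over the open unit disk 𝔻 = {z ∈ ℂ : |z| < 1} with respect to Lebesgue area measure satisfies (1/(2π)) · ∫_𝔻 (a/(1 − a·conj(z))) · (conj(b)/(1 − conj(b)·z)) · (1 − |z|²)² dA(z) = ∑_{p=0}^∞ (a·conj(b))^{p+1} / ((p+1)(p+2)(p+3)). -/
open MeasureTheory

namespace SigmaKernelAux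

open MeasureTheory Set Metric intervalIntegral
open scoped Real


lemma radial2 (k : ℕ) : ∫ r in (0:ℝ)..1, r^(k+1)*(1-r^2)^2
    = 8/(((k:ℝ)+2)*((k:ℝ)+4)*((k:ℝ)+6)) := by
  have h : ∀ r : ℝ, r^(k+1)*(1-r^2)^2 = r^(k+1) - 2*r^(k+3) + r^(k+5) := by intro r; ring
  simp_rw [h]
  rw [intervalIntegral.integral_add (((intervalIntegrable_pow _).sub
        ((intervalIntegrable_pow _).const_mul 2))) (intervalIntegrable_pow _),
      intervalIntegral.integral_sub (intervalIntegrable_pow _)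
        ((intervalIntegrable_pow _).const_mul 2),
      intervalIntegral.integral_const_mul]
  simp only [integral_pow]
  have h2 : ((k:ℝ)+2) ≠ 0 := by positivity
  have h4 : ((k:ℝ)+4) ≠ 0 := by positivity
  have h6 : ((k:ℝ)+6) ≠ 0 := by positivity
  push_cast
  field_simp
  ring

lemma radial1 (k : ℕ) : ∫ r in (0:ℝ)..1, r^(k+1)*(1-r^2)
    = 2/(((k:ℝ)+2)*((k:ℝ)+4)) := by
  have h : ∀ r : ℝ, r^(k+1)*(1-r^2) = r^(k+1) - r^(k+3) := by intro r; ring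
  simp_rw [h]
  rw [intervalIntegral.integral_sub (intervalIntegrable_pow _) (intervalIntegrable_pow _)]
  simp only [integral_pow]
  have h2 : ((k:ℝ)+2) ≠ 0 := by positivity
  have h4 : ((k:ℝ)+4) ≠ 0 := by positivity
  push_cast
  field_simp
  ring

lemma angular (m n : ℕ) :
    ∫ θ in (-π:ℝ)..π, Complex.exp ((((n:ℂ)-(m:ℂ))*Complex.I)*θ)
      = if n = m then (2*(π:ℂ)) else 0 := by
  rcases eq_or_ne n m with h|h
  · subst h
    simp only [sub_self, zero_mul, Complex.exp_zero]
    simp [two_mul]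
  · rw [if_neg h]
    have hnm : ((n:ℂ)) - (m:ℂ) ≠ 0 := by
      rw [sub_ne_zero]
      exact_mod_cast fun hh => h (Nat.cast_injective hh)
    have hc : ((n:ℂ)-(m:ℂ))*Complex.I ≠ 0 := mul_ne_zero hnm Complex.I_ne_zero
    rw [integral_exp_mul_complex hc]
    have key : ∀ s : ℝ, ((n:ℂ)-(m:ℂ))*Complex.I * s
        = (((n:ℤ)-(m:ℤ) : ℤ):ℂ) * ((s:ℂ)*Complex.I) := by
      intro s; push_cast; ring
    rw [key π, key (-π)]
    rw [Complex.exp_int_mul, Complex.exp_int_mul]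
    set d : ℤ := (n:ℤ) - (m:ℤ)
    have h1 : Complex.exp ((π:ℂ)*Complex.I) = -1 := Complex.exp_pi_mul_I
    have h2 : Complex.exp (((-π:ℝ):ℂ)*Complex.I) = -1 := by
      push_cast
      rw [neg_mul, Complex.exp_neg, h1]
      norm_num
    rw [h1, h2, sub_self, zero_div]


lemma polar_smul {E : Type*} [NormedAddCommGroup E] [NormedSpace ℝ E] (g : ℂ → E) :
    ∫ z in ball (0:ℂ) 1, g z
      = ∫ p in Ioo (0:ℝ) 1 ×ˢ Ioo (-π) π, p.1 • g (Complex.polarCoord.symm p) := by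
  have hS : MeasurableSet (Ioo (0:ℝ) 1 ×ˢ Ioo (-π) π) :=
    measurableSet_Ioo.prod measurableSet_Ioo
  rw [← MeasureTheory.integral_indicator measurableSet_ball,
      ← Complex.integral_comp_polarCoord_symm, polarCoord_target]
  have key : ∀ p ∈ (Ioi (0:ℝ) ×ˢ Ioo (-π) π),
      p.1 • (ball (0:ℂ) 1).indicator g (Complex.polarCoord.symm p)
        = (Ioo (0:ℝ) 1 ×ˢ Ioo (-π) π).indicator
            (fun q => q.1 • g (Complex.polarCoord.symm q)) p := by
    rintro ⟨r, θ⟩ ⟨hr, hθ⟩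
    simp only [Set.mem_Ioi] at hr
    have habs : ‖Complex.polarCoord.symm (r, θ)‖ = r := by
      rw [Complex.norm_polarCoord_symm]; exact abs_of_pos hr
    have hmem : Complex.polarCoord.symm (r, θ) ∈ ball (0:ℂ) 1 ↔ r < 1 := by
      rw [mem_ball_zero_iff, habs]
    by_cases h1 : r < 1
    · rw [Set.indicator_of_mem (hmem.mpr h1), Set.indicator_of_mem (by
        exact ⟨⟨hr, h1⟩, hθ⟩)]
    · rw [Set.indicator_of_notMem (fun hh => h1 (hmem.mp hh)),
        Set.indicator_of_notMem (fun hh => h1 hh.1.2), smul_zero]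
  rw [setIntegral_congr_fun (measurableSet_Ioi.prod measurableSet_Ioo) key,
      setIntegral_indicator hS,
      Set.inter_eq_self_of_subset_right
        (Set.prod_mono_left Ioo_subset_Ioi_self)]

lemma symm_eq (p : ℝ × ℝ) :
    Complex.polarCoord.symm p = (p.1 : ℂ) * Complex.exp ((p.2 : ℂ) * Complex.I) := by
  rw [Complex.polarCoord_symm_apply, Complex.exp_mul_I, Complex.ofReal_cos,
    Complex.ofReal_sin]

lemma polar_mn (m n : ℕ) (f : ℝ → ℝ) :
    ∫ z in ball (0:ℂ) 1, (starRingEnd ℂ z)^m * z^n * ((f (‖z‖) : ℝ) : ℂ)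
      = (↑(∫ r in (0:ℝ)..1, r^(m+n+1) * f r) : ℂ)
          * ∫ θ in (-π:ℝ)..π, Complex.exp ((((n:ℂ)-(m:ℂ))*Complex.I)*θ) := by
  rw [polar_smul (fun z => (starRingEnd ℂ z)^m * z^n * ((f (‖z‖) : ℝ) : ℂ))]
  have hS : MeasurableSet (Ioo (0:ℝ) 1 ×ˢ Ioo (-π) π) :=
    measurableSet_Ioo.prod measurableSet_Ioo
  have key : ∀ p ∈ (Ioo (0:ℝ) 1 ×ˢ Ioo (-π) π),
      p.1 • ((starRingEnd ℂ (Complex.polarCoord.symm p))^m * (Complex.polarCoord.symm p)^n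
          * ((f (‖Complex.polarCoord.symm p‖) : ℝ) : ℂ))
        = (fun r : ℝ => ((r^(m+n+1) * f r : ℝ) : ℂ)) p.1 *
          (fun θ : ℝ => Complex.exp ((((n:ℂ)-(m:ℂ))*Complex.I)*θ)) p.2 := by
    rintro ⟨r, θ⟩ ⟨hr, hθ⟩
    simp only
    have hrpos : 0 < r := hr.1
    have habs : ‖Complex.polarCoord.symm (r, θ)‖ = r := by
      rw [Complex.norm_polarCoord_symm]; exact abs_of_pos hrpos
    have hconj : starRingEnd ℂ (Complex.polarCoord.symm (r, θ))
        = (r : ℂ) * Complex.exp (-((θ : ℂ) * Complex.I)) := by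
      rw [symm_eq, map_mul, Complex.conj_ofReal, ← Complex.exp_conj, map_mul,
        Complex.conj_ofReal, Complex.conj_I, mul_neg]
    rw [habs, hconj, symm_eq]
    rw [mul_pow, mul_pow, ← Complex.exp_nat_mul, ← Complex.exp_nat_mul]
    have hexp : Complex.exp ((m:ℂ) * -((θ:ℂ)*Complex.I)) *
        Complex.exp ((n:ℂ) * ((θ:ℂ)*Complex.I))
        = Complex.exp ((((n:ℂ)-(m:ℂ))*Complex.I)*θ) := by
      rw [← Complex.exp_add]; congr 1; ring
    calc r • ((r:ℂ)^m * Complex.exp ((m:ℂ) * -((θ:ℂ)*Complex.I))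
            * ((r:ℂ)^n * Complex.exp ((n:ℂ) * ((θ:ℂ)*Complex.I))) * ((f r : ℝ) : ℂ))
        = ((r:ℂ) * (r:ℂ)^m * (r:ℂ)^n * ((f r : ℝ):ℂ)) *
            (Complex.exp ((m:ℂ) * -((θ:ℂ)*Complex.I)) *
             Complex.exp ((n:ℂ) * ((θ:ℂ)*Complex.I))) := by
          rw [Complex.real_smul]; ring
      _ = ((r^(m+n+1) * f r : ℝ) : ℂ) * Complex.exp ((((n:ℂ)-(m:ℂ))*Complex.I)*θ) := by
          rw [hexp]; push_cast; ring
  rw [setIntegral_congr_fun hS key, Measure.volume_eq_prod,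
    setIntegral_prod_mul (fun r : ℝ => ((r^(m+n+1) * f r : ℝ) : ℂ))
      (fun θ : ℝ => Complex.exp ((((n:ℂ)-(m:ℂ))*Complex.I)*θ)) (Ioo (0:ℝ) 1) (Ioo (-π) π)]
  congr 1
  · rw [intervalIntegral.integral_of_le zero_le_one,
      MeasureTheory.integral_Ioc_eq_integral_Ioo]
    exact _root_.integral_ofReal
  · rw [intervalIntegral.integral_of_le (by linarith [Real.pi_pos] : (-π:ℝ) ≤ π),
      integral_Ioc_eq_integral_Ioo]

lemma polar_abs (f : ℝ → ℝ) :
    ∫ z in ball (0:ℂ) 1, f (‖z‖) = (2*π) * ∫ r in (0:ℝ)..1, r * f r := by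
  rw [polar_smul (fun z => f (‖z‖))]
  have hS : MeasurableSet (Ioo (0:ℝ) 1 ×ˢ Ioo (-π) π) :=
    measurableSet_Ioo.prod measurableSet_Ioo
  have key : ∀ p ∈ (Ioo (0:ℝ) 1 ×ˢ Ioo (-π) π),
      p.1 • (fun z => f (‖z‖)) (Complex.polarCoord.symm p)
        = (fun r : ℝ => r * f r) p.1 * (fun _ : ℝ => (1:ℝ)) p.2 := by
    rintro ⟨r, θ⟩ ⟨hr, hθ⟩
    have habs : ‖Complex.polarCoord.symm (r, θ)‖ = r := by
      rw [Complex.norm_polarCoord_symm]; exact abs_of_pos hr.1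
    simp only [smul_eq_mul, mul_one]
    rw [habs]
  rw [setIntegral_congr_fun hS key, Measure.volume_eq_prod,
    setIntegral_prod_mul (fun r : ℝ => r * f r) (fun _ : ℝ => (1:ℝ))
      (Ioo (0:ℝ) 1) (Ioo (-π) π)]
  rw [setIntegral_const, smul_eq_mul, mul_one, measureReal_def, Real.volume_Ioo,
    ENNReal.toReal_ofReal (by linarith [Real.pi_pos] : (0:ℝ) ≤ π - -π)]
  rw [intervalIntegral.integral_of_le zero_le_one, integral_Ioc_eq_integral_Ioo]
  ring


lemma integrableOn_ball_of_continuous {E : Type*} [NormedAddCommGroup E]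
    (g : ℂ → E) (hg : Continuous g) : IntegrableOn g (ball (0:ℂ) 1) :=
  (hg.continuousOn.integrableOn_compact (isCompact_closedBall 0 1)).mono_set
    ball_subset_closedBall

lemma normint (m n : ℕ) :
    ∫ z in ball (0:ℂ) 1, ‖z‖ ^ (m+n) * (1 - ‖z‖ ^ 2) ^ 2
      = 2*π*(8/(((m:ℝ)+(n:ℝ)+2)*((m:ℝ)+(n:ℝ)+4)*((m:ℝ)+(n:ℝ)+6))) := by
  rw [polar_abs (fun t => t^(m+n)*(1-t^2)^2)]
  rw [show (∫ r in (0:ℝ)..1, r * (r^(m+n)*(1-r^2)^2))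
      = ∫ r in (0:ℝ)..1, r^(m+n+1)*(1-r^2)^2 from
    intervalIntegral.integral_congr fun r _ => by ring]
  rw [radial2 (m+n)]
  push_cast
  ring

lemma normint1 (m : ℕ) :
    ∫ z in ball (0:ℂ) 1, 2*(‖z‖ ^ m * (1 - ‖z‖ ^ 2))
      = 2*(2*π*(2/(((m:ℝ)+2)*((m:ℝ)+4)))) := by
  rw [MeasureTheory.integral_const_mul]
  congr 1
  rw [polar_abs (fun t => t^m*(1-t^2))]
  rw [show (∫ r in (0:ℝ)..1, r * (r^m*(1-r^2)))
      = ∫ r in (0:ℝ)..1, r^(m+1)*(1-r^2) from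
    intervalIntegral.integral_congr fun r _ => by ring]
  rw [radial1 m]

lemma mnint (m n : ℕ) :
    ∫ z in ball (0:ℂ) 1, (starRingEnd ℂ z)^m * z^n * (((1 - ‖z‖ ^ 2) ^ 2 : ℝ) : ℂ)
      = if n = m then (2*(π:ℂ)/(((m:ℂ)+1)*((m:ℂ)+2)*((m:ℂ)+3))) else 0 := by
  rw [polar_mn m n (fun t => (1-t^2)^2), radial2 (m+n), angular m n]
  by_cases h : n = m
  · rw [if_pos h, if_pos h]
    subst h
    have h1 : ((n:ℂ)+1) ≠ 0 := by exact_mod_cast (show (n+1 : ℕ) ≠ 0 by omega)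
    have h2 : ((n:ℂ)+2) ≠ 0 := by exact_mod_cast (show (n+2 : ℕ) ≠ 0 by omega)
    have h3 : ((n:ℂ)+3) ≠ 0 := by exact_mod_cast (show (n+3 : ℕ) ≠ 0 by omega)
    have hpi : (π:ℂ) ≠ 0 := Complex.ofReal_ne_zero.mpr Real.pi_ne_zero
    have h4 : ((n:ℂ)+(n:ℂ)+2) ≠ 0 := by exact_mod_cast (show (n+n+2 : ℕ) ≠ 0 by omega)
    have h5 : ((n:ℂ)+(n:ℂ)+4) ≠ 0 := by exact_mod_cast (show (n+n+4 : ℕ) ≠ 0 by omega)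
    have h6 : ((n:ℂ)+(n:ℂ)+6) ≠ 0 := by exact_mod_cast (show (n+n+6 : ℕ) ≠ 0 by omega)
    push_cast
    field_simp
    rw [div_eq_one_iff_eq (by rw [show ((n:ℂ) * (1 + 1) + 2) * ((n:ℂ) * (1 + 1) + 4) * ((n:ℂ) * (1 + 1) + 6) = ((n:ℂ)+(n:ℂ)+2)*((n:ℂ)+(n:ℂ)+4)*((n:ℂ)+(n:ℂ)+6) by ring]; exact mul_ne_zero (mul_ne_zero h4 h5) h6)]
    ring
  · rw [if_neg h, if_neg h, mul_zero]
lemma summable_inv_sq_succ : Summable fun n : ℕ => 1/((n:ℝ)+1)^2 := by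
  have h0 : Summable fun n : ℕ => 1/((n:ℝ))^2 :=
    Real.summable_one_div_nat_pow.mpr one_lt_two
  have h1 := (summable_nat_add_iff (f := fun n : ℕ => 1/((n:ℝ))^2) 1).mpr h0
  exact h1.congr fun n => by push_cast; ring

lemma sq_le_trip (m n : ℕ) :
    ((n:ℝ)+1)^2 ≤ ((m:ℝ)+(n:ℝ)+2)*((m:ℝ)+(n:ℝ)+4)*((m:ℝ)+(n:ℝ)+6) := by
  have hm : (0:ℝ) ≤ m := Nat.cast_nonneg m
  have hn : (0:ℝ) ≤ n := Nat.cast_nonneg n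
  have h1 : ((n:ℝ)+1)^2 ≤ ((m:ℝ)+(n:ℝ)+2)*((m:ℝ)+(n:ℝ)+4) := by nlinarith
  have h2 : ((m:ℝ)+(n:ℝ)+2)*((m:ℝ)+(n:ℝ)+4)
      ≤ (((m:ℝ)+(n:ℝ)+2)*((m:ℝ)+(n:ℝ)+4))*((m:ℝ)+(n:ℝ)+6) := by
    nlinarith [mul_nonneg (by linarith : (0:ℝ) ≤ (m:ℝ)+(n:ℝ)+2)
      (by linarith : (0:ℝ) ≤ (m:ℝ)+(n:ℝ)+4),
      (by linarith : (0:ℝ) ≤ (m:ℝ)+(n:ℝ)+5)]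
  linarith

lemma geom_expand (c w : ℂ) (hc : ‖c‖ = 1) (hw : ‖w‖ < 1) :
    c / (1 - c*w) = ∑' n : ℕ, c^(n+1) * w^n := by
  have hnorm : ‖c*w‖ < 1 := by
    rw [norm_mul, hc, one_mul]; exact hw
  rw [div_eq_mul_inv, ← tsum_geometric_of_norm_lt_one hnorm, ← tsum_mul_left]
  exact tsum_congr fun n => by rw [mul_pow]; ring

noncomputable def Hfun (b : ℂ) (m n : ℕ) (z : ℂ) : ℂ :=
  (starRingEnd ℂ b)^(n+1)
    * ((starRingEnd ℂ z)^m * z^n * (((1 - ‖z‖ ^ 2) ^ 2 : ℝ) : ℂ))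

lemma inner_int (b : ℂ) (hb : ‖b‖ = 1) (m : ℕ) :
    ∫ z in ball (0:ℂ) 1, (starRingEnd ℂ z)^m * (((1 - ‖z‖ ^ 2) ^ 2 : ℝ) : ℂ)
        * ((starRingEnd ℂ b) / (1 - (starRingEnd ℂ b) * z))
      = (starRingEnd ℂ b)^(m+1) * (2*(π:ℂ)/(((m:ℂ)+1)*((m:ℂ)+2)*((m:ℂ)+3))) := by
  have hcabs : ‖starRingEnd ℂ b‖ = 1 := by rw [Complex.norm_conj]; exact hb
  have hpt : ∀ z ∈ ball (0:ℂ) 1,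
      (starRingEnd ℂ z)^m * (((1 - ‖z‖ ^ 2) ^ 2 : ℝ) : ℂ)
          * ((starRingEnd ℂ b) / (1 - (starRingEnd ℂ b) * z))
        = ∑' n : ℕ, Hfun b m n z := by
    intro z hz
    rw [mem_ball_zero_iff] at hz
    rw [geom_expand _ z hcabs hz, ← tsum_mul_left]
    exact tsum_congr fun n => by unfold Hfun; ring
  have hcont : ∀ n : ℕ, Continuous (Hfun b m n) := by
    intro n
    unfold Hfun
    apply continuous_const.mul
    apply Continuous.mul
    · exact ((RCLike.continuous_conj (K := ℂ)).pow m).mul (continuous_pow n)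
    · exact Complex.continuous_ofReal.comp
        ((continuous_const.sub (continuous_norm.pow 2)).pow 2)
  have hint : ∀ n : ℕ, IntegrableOn (Hfun b m n) (ball (0:ℂ) 1) :=
    fun n => integrableOn_ball_of_continuous _ (hcont n)
  have hnormval : ∀ n : ℕ, (∫ z in ball (0:ℂ) 1, ‖Hfun b m n z‖)
      = 2*π*(8/(((m:ℝ)+(n:ℝ)+2)*((m:ℝ)+(n:ℝ)+4)*((m:ℝ)+(n:ℝ)+6))) := by
    intro n
    have hwv : ∀ z ∈ ball (0:ℂ) 1,
        ‖Hfun b m n z‖ = ‖z‖ ^ (m+n) * (1 - ‖z‖ ^ 2) ^ 2 := by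
      intro z _
      have habsw : |(1 - ‖z‖ ^ 2) ^ 2| = (1 - ‖z‖ ^ 2) ^ 2 :=
        abs_of_nonneg (by positivity)
      unfold Hfun
      simp only [norm_mul, norm_pow, Complex.norm_conj,
        Complex.norm_real, Real.norm_eq_abs, sq_abs, hcabs, one_pow, one_mul, habsw]
      all_goals rw [pow_add]
      all_goals ring
    rw [setIntegral_congr_fun measurableSet_ball hwv, normint m n]
  have hsum : Summable fun n : ℕ => ∫ z in ball (0:ℂ) 1, ‖Hfun b m n z‖ := by
    have hbase : Summable fun n : ℕ => 16*π*(1/((n:ℝ)+1)^2) :=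
      summable_inv_sq_succ.mul_left _
    apply Summable.of_nonneg_of_le
      (fun n => integral_nonneg fun z => norm_nonneg _) (fun n => ?_) hbase
    rw [hnormval n]
    have hm : (0:ℝ) ≤ (m:ℝ) := Nat.cast_nonneg m
    have hn : (0:ℝ) ≤ (n:ℝ) := Nat.cast_nonneg n
    rw [show (2*π*(8/(((m:ℝ)+(n:ℝ)+2)*((m:ℝ)+(n:ℝ)+4)*((m:ℝ)+(n:ℝ)+6))))
        = 16*π/(((m:ℝ)+(n:ℝ)+2)*((m:ℝ)+(n:ℝ)+4)*((m:ℝ)+(n:ℝ)+6)) from by ring,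
      show (16*π*(1/((n:ℝ)+1)^2)) = 16*π/((n:ℝ)+1)^2 from by ring]
    gcongr
    exact sq_le_trip m n
  rw [setIntegral_congr_fun measurableSet_ball hpt,
    ← integral_tsum_of_summable_integral_norm hint hsum]
  rw [show (∑' n : ℕ, ∫ z in ball (0:ℂ) 1, Hfun b m n z)
      = ∑' n : ℕ, (starRingEnd ℂ b)^(n+1)
          * (if n = m then (2*(π:ℂ)/(((m:ℂ)+1)*((m:ℂ)+2)*((m:ℂ)+3))) else 0) from
    tsum_congr fun n => by
      unfold Hfun
      rw [MeasureTheory.integral_const_mul, mnint m n]]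
  rw [tsum_eq_single m (fun n hn => by rw [if_neg hn, mul_zero]), if_pos rfl]

noncomputable def Gfun (a b : ℂ) (m : ℕ) (z : ℂ) : ℂ :=
  a^(m+1) * ((starRingEnd ℂ z)^m * (((1 - ‖z‖ ^ 2) ^ 2 : ℝ) : ℂ)
    * ((starRingEnd ℂ b) / (1 - (starRingEnd ℂ b) * z)))

lemma one_sub_ne (b z : ℂ) (hb : ‖b‖ = 1) (hz : z ∈ ball (0:ℂ) 1) :
    (1:ℂ) - (starRingEnd ℂ b) * z ≠ 0 := by
  rw [mem_ball_zero_iff] at hz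
  intro h
  rw [sub_eq_zero] at h
  have h2 : ‖(1:ℂ)‖ = ‖(starRingEnd ℂ b) * z‖ := by rw [h]
  rw [norm_one, norm_mul, RCLike.norm_conj, hb, one_mul] at h2
  rw [← h2] at hz
  exact lt_irrefl _ hz

lemma normG_le (a b : ℂ) (ha : ‖a‖ = 1) (hb : ‖b‖ = 1) (m : ℕ) :
    ∀ z ∈ ball (0:ℂ) 1, ‖Gfun a b m z‖ ≤ 2*(‖z‖ ^ m * (1 - ‖z‖ ^ 2)) := by
  intro z hz
  have hne := one_sub_ne b z hb hz
  rw [mem_ball_zero_iff] at hz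
  have ht0 : 0 ≤ ‖z‖ := norm_nonneg z
  have hlow : 1 - ‖z‖ ≤ ‖1 - (starRingEnd ℂ b) * z‖ := by
    have := norm_sub_norm_le (1:ℂ) ((starRingEnd ℂ b) * z)
    rw [norm_one, norm_mul, RCLike.norm_conj, hb, one_mul] at this
    exact this
  have hBpos : 0 < ‖1 - (starRingEnd ℂ b) * z‖ :=
    lt_of_lt_of_le (by linarith) hlow
  have habsw : |(1 - ‖z‖ ^ 2) ^ 2| = (1 - ‖z‖ ^ 2) ^ 2 :=
    abs_of_nonneg (by positivity)
  have hcabs : ‖starRingEnd ℂ b‖ = 1 := by rw [Complex.norm_conj]; exact hb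
  have hval : ‖Gfun a b m z‖ = ‖z‖ ^ m * (1 - ‖z‖ ^ 2) ^ 2
      / ‖1 - (starRingEnd ℂ b) * z‖ := by
    unfold Gfun
    simp only [norm_mul, norm_pow, norm_div, Complex.norm_conj,
      Complex.norm_real, Real.norm_eq_abs, sq_abs, ha, hcabs, one_pow, one_mul, habsw]
    ring
  rw [hval, div_le_iff₀ hBpos]
  nlinarith [pow_nonneg ht0 m, sq_nonneg (‖z‖),
    mul_nonneg (pow_nonneg ht0 m) (mul_nonneg (by nlinarith : (0:ℝ) ≤ 1 - ‖z‖ ^ 2) (by linarith : (0:ℝ) ≤ 1 - ‖z‖)),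
    mul_nonneg (pow_nonneg ht0 m) (by nlinarith : (0:ℝ) ≤ 1 - ‖z‖ ^ 2)]

lemma intG (a b : ℂ) (ha : ‖a‖ = 1) (hb : ‖b‖ = 1) (m : ℕ) :
    IntegrableOn (Gfun a b m) (ball (0:ℂ) 1) := by
  constructor
  · apply ContinuousOn.aestronglyMeasurable _ measurableSet_ball
    unfold Gfun
    apply ContinuousOn.mul continuousOn_const
    apply ContinuousOn.mul
    · exact ((((RCLike.continuous_conj (K := ℂ)).pow m).mul (Complex.continuous_ofReal.comp
        ((continuous_const.sub (continuous_norm.pow 2)).pow 2)))).continuousOn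
    · exact ContinuousOn.div continuousOn_const
        ((continuous_const.sub (continuous_const.mul continuous_id)).continuousOn)
        (fun z hz => one_sub_ne b z hb hz)
  · apply HasFiniteIntegral.restrict_of_bounded (C := 2) measure_ball_lt_top
    rw [ae_restrict_iff' measurableSet_ball]
    filter_upwards with z hz
    refine (normG_le a b ha hb m z hz).trans ?_
    rw [mem_ball_zero_iff] at hz
    have ht0 : 0 ≤ ‖z‖ := norm_nonneg z
    have h1 : ‖z‖ ^ m ≤ 1 := pow_le_one₀ ht0 hz.le
    nlinarith [pow_nonneg ht0 m, sq_nonneg (‖z‖)]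
end SigmaKernelAux

open SigmaKernelAux Metric Set intervalIntegral
open scoped Real

/-- **The kernel integral `σ(a,b)` over the unit disk.**
For `a, b` on the unit circle,
`(1/(2π)) ∫_𝔻 (a/(1 − a·conj z)) (conj b/(1 − conj b·z)) (1 − |z|²)² dA(z)
  = ∑_{p≥0} (a·conj b)^{p+1}/((p+1)(p+2)(p+3))`. -/
theorem sigma_kernel_integral (a b : ℂ) (ha : ‖a‖ = 1) (hb : ‖b‖ = 1) :
    (1 / (2 * (Real.pi : ℂ))) *
        ∫ z in Metric.ball (0 : ℂ) 1,
          (a / (1 - a * (starRingEnd ℂ) z)) * ((starRingEnd ℂ) b / (1 - (starRingEnd ℂ) b * z)) *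
            (((1 - ‖z‖ ^ 2) ^ 2 : ℝ) : ℂ)
      = ∑' p : ℕ, (a * (starRingEnd ℂ) b) ^ (p + 1)
          / (((p : ℂ) + 1) * ((p : ℂ) + 2) * ((p : ℂ) + 3)) := by
  have hpt : ∀ z ∈ ball (0:ℂ) 1,
      (a / (1 - a * (starRingEnd ℂ) z)) * ((starRingEnd ℂ) b / (1 - (starRingEnd ℂ) b * z)) *
          (((1 - ‖z‖ ^ 2) ^ 2 : ℝ) : ℂ)
        = ∑' m : ℕ, Gfun a b m z := by
    intro z hz
    rw [mem_ball_zero_iff] at hz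
    have h1 : a / (1 - a * (starRingEnd ℂ) z) = ∑' m : ℕ, a^(m+1) * ((starRingEnd ℂ) z)^m :=
      geom_expand a ((starRingEnd ℂ) z) ha (by rwa [Complex.norm_conj])
    rw [h1, ← tsum_mul_right, ← tsum_mul_right]
    exact tsum_congr fun m => by unfold Gfun; ring
  have hintG : ∀ m : ℕ, IntegrableOn (Gfun a b m) (ball (0:ℂ) 1) := intG a b ha hb
  have hnorm_le : ∀ m : ℕ, (∫ z in ball (0:ℂ) 1, ‖Gfun a b m z‖) ≤ 8*π*(1/(((m:ℝ)+1)^2)) := by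
    intro m
    have step1 : (∫ z in ball (0:ℂ) 1, ‖Gfun a b m z‖)
        ≤ ∫ z in ball (0:ℂ) 1, 2*(‖z‖ ^ m * (1 - ‖z‖ ^ 2)) := by
      apply setIntegral_mono_on (hintG m).norm
        (integrableOn_ball_of_continuous _ (by
          exact continuous_const.mul (((continuous_norm.pow m)).mul
            (continuous_const.sub (continuous_norm.pow 2)))))
        measurableSet_ball (normG_le a b ha hb m)
    refine step1.trans ?_
    rw [normint1 m]
    have hm : (0:ℝ) ≤ (m:ℝ) := Nat.cast_nonneg m
    rw [show (2*(2*π*(2/(((m:ℝ)+2)*((m:ℝ)+4))))) = 8*π/(((m:ℝ)+2)*((m:ℝ)+4)) from by ring,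
      show (8*π*(1/(((m:ℝ)+1)^2))) = 8*π/(((m:ℝ)+1)^2) from by ring]
    gcongr <;> nlinarith
  have hsumG : Summable fun m : ℕ => ∫ z in ball (0:ℂ) 1, ‖Gfun a b m z‖ := by
    have hbase : Summable fun m : ℕ => 8*π*(1/((m:ℝ)+1)^2) :=
      summable_inv_sq_succ.mul_left _
    exact Summable.of_nonneg_of_le
      (fun m => integral_nonneg fun z => norm_nonneg _) hnorm_le hbase
  rw [setIntegral_congr_fun measurableSet_ball hpt,
    ← integral_tsum_of_summable_integral_norm hintG hsumG]
  rw [show (∑' m : ℕ, ∫ z in ball (0:ℂ) 1, Gfun a b m z)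
      = ∑' m : ℕ, 2*(π:ℂ) * ((a * (starRingEnd ℂ) b)^(m+1)
          / (((m:ℂ)+1)*((m:ℂ)+2)*((m:ℂ)+3))) from
    tsum_congr fun m => by
      unfold Gfun
      rw [MeasureTheory.integral_const_mul, inner_int b hb m, mul_pow]
      ring]
  rw [tsum_mul_left, ← mul_assoc, one_div, inv_mul_cancel₀
    (mul_ne_zero two_ne_zero (Complex.ofReal_ne_zero.mpr Real.pi_ne_zero)), one_mul]
end

section
/- The complex series ∑_{p=1}^∞ i^p / (p·(p+1)·(p+2)) converges and its sum equals (3 − π)/4 − i·(log 2 − 1)/2, where i is the imaginary unit. -/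
open Complex

/-- Closed form for the sum on the open unit disk (minus 0). -/
noncomputable def Fc (z : ℂ) : ℂ :=
  (1/2) * (-(Complex.log (1-z)))
    - z⁻¹ * (-(Complex.log (1-z)) - z)
    + (2*z^2)⁻¹ * (-(Complex.log (1-z)) - z - z^2/2)

lemma term_eq {z : ℂ} (hz0 : z ≠ 0) (n : ℕ) :
    z ^ (n + 1) / (((n : ℂ) + 1) * ((n : ℂ) + 2) * ((n : ℂ) + 3))
    = 1/2 * (z ^ (n+1) / ((n:ℂ)+1)) - z⁻¹ * (z ^ (n+2) / ((n:ℂ)+2))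
      + (2*z^2)⁻¹ * (z ^ (n+3) / ((n:ℂ)+3)) := by
  have h1 : ((n:ℂ)+1) ≠ 0 := by exact_mod_cast (by positivity : ((n:ℝ)+1) ≠ 0)
  have h2 : ((n:ℂ)+2) ≠ 0 := by exact_mod_cast (by positivity : ((n:ℝ)+2) ≠ 0)
  have h3 : ((n:ℂ)+3) ≠ 0 := by exact_mod_cast (by positivity : ((n:ℝ)+3) ≠ 0)
  have hcoef : (1:ℂ) / (((n : ℂ) + 1) * ((n : ℂ) + 2) * ((n : ℂ) + 3))
      = 1/2 * (1/((n:ℂ)+1)) - 1/((n:ℂ)+2) + 1/2 * (1/((n:ℂ)+3)) := by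
    field_simp; ring
  have e2 : z ^ (n+2) = z ^ (n+1) * z := by ring
  have e3 : z ^ (n+3) = z ^ (n+1) * z^2 := by ring
  have r2 : z⁻¹ * (z ^ (n+2) / ((n:ℂ)+2)) = z ^ (n+1) * (1/((n:ℂ)+2)) := by
    rw [e2]; field_simp
  have r3 : (2*z^2)⁻¹ * (z ^ (n+3) / ((n:ℂ)+3)) = z ^ (n+1) * (1/2 * (1/((n:ℂ)+3))) := by
    rw [e3]; field_simp
  rw [r2, r3, ← mul_one_div (z ^ (n+1)), hcoef]
  ring

lemma closed_form {z : ℂ} (hz : ‖z‖ < 1) (hz0 : z ≠ 0) :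
    HasSum (fun n : ℕ => z ^ (n + 1) / (((n : ℂ) + 1) * ((n : ℂ) + 2) * ((n : ℂ) + 3)))
      (Fc z) := by
  have H := Complex.hasSum_taylorSeries_neg_log hz
  have H1 : HasSum (fun n : ℕ => z ^ (n+1) / ((n:ℂ)+1)) (-(Complex.log (1-z))) := by
    have := (hasSum_nat_add_iff' 1).mpr H
    simpa using this
  have H2 : HasSum (fun n : ℕ => z ^ (n+2) / ((n:ℂ)+2)) (-(Complex.log (1-z)) - z) := by
    have := (hasSum_nat_add_iff' 2).mpr H
    simpa [Finset.sum_range_succ] using this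
  have H3 : HasSum (fun n : ℕ => z ^ (n+3) / ((n:ℂ)+3)) (-(Complex.log (1-z)) - z - z^2/2) := by
    have := (hasSum_nat_add_iff' 3).mpr H
    simpa [Finset.sum_range_succ, sub_sub] using this
  have Hc := ((H1.mul_left (1/2)).sub (H2.mul_left z⁻¹)).add (H3.mul_left (2*z^2)⁻¹)
  have hfun : (fun n : ℕ => z ^ (n + 1) / (((n : ℂ) + 1) * ((n : ℂ) + 2) * ((n : ℂ) + 3)))
      = fun n : ℕ => 1/2 * (z ^ (n+1) / ((n:ℂ)+1)) - z⁻¹ * (z ^ (n+2) / ((n:ℂ)+2))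
        + (2*z^2)⁻¹ * (z ^ (n+3) / ((n:ℂ)+3)) := funext (term_eq hz0)
  rw [hfun]
  exact Hc

lemma log_one_sub_I :
    Complex.log (1 - Complex.I)
      = ((Real.log 2 / 2 : ℝ) : ℂ) - ((Real.pi / 4 : ℝ) : ℂ) * Complex.I := by
  have hsqrt : Real.exp (Real.log 2 / 2) = Real.sqrt 2 := by
    rw [← Real.log_sqrt (by norm_num)]
    exact Real.exp_log (Real.sqrt_pos.mpr two_pos)
  have hexp : Complex.exp (((Real.log 2 / 2 : ℝ) : ℂ) - ((Real.pi / 4 : ℝ) : ℂ) * Complex.I)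
      = 1 - Complex.I := by
    rw [sub_eq_add_neg, ← neg_mul, Complex.exp_add, ← Complex.ofReal_neg, Complex.exp_mul_I,
      ← Complex.ofReal_exp, hsqrt, ← Complex.ofReal_cos, ← Complex.ofReal_sin,
      Real.cos_neg, Real.sin_neg, Real.cos_pi_div_four, Real.sin_pi_div_four]
    have h2 : Real.sqrt 2 * (Real.sqrt 2 / 2) = 1 := by
      rw [mul_div_assoc']
      rw [Real.mul_self_sqrt (by norm_num)]
      norm_num
    apply Complex.ext <;> simp [h2]
  rw [← hexp, Complex.log_exp]
  · simp only [Complex.sub_im, Complex.ofReal_im, Complex.mul_im, Complex.ofReal_re,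
      Complex.I_im, Complex.I_re, mul_zero, mul_one, zero_sub]
    nlinarith [Real.pi_pos]
  · simp only [Complex.sub_im, Complex.ofReal_im, Complex.mul_im, Complex.ofReal_re,
      Complex.I_im, Complex.I_re, mul_zero, mul_one, zero_sub]
    nlinarith [Real.pi_pos]

lemma Fc_I :
    Fc Complex.I = (((3 - Real.pi) / 4 : ℝ) : ℂ) - Complex.I * (((Real.log 2 - 1) / 2 : ℝ) : ℂ) := by
  have hI2 : (Complex.I : ℂ)^2 = -1 := Complex.I_sq
  simp only [Fc, log_one_sub_I, hI2, Complex.inv_I]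
  apply Complex.ext <;>
    simp [Complex.ext_iff, Complex.div_re, Complex.div_im, Complex.normSq] <;> push_cast <;> ring

/-- **Evaluation of `σ(i,1)`.**
The series `∑_{p=1}^∞ i^p/(p(p+1)(p+2))` converges with sum `(3 − π)/4 − i(log 2 − 1)/2`.
(Here the summation index is shifted so that `p = n + 1` runs over `1, 2, 3, …`.) -/
theorem i_power_series_eval :
    HasSum (fun n : ℕ => Complex.I ^ (n + 1) / (((n : ℂ) + 1) * ((n : ℂ) + 2) * ((n : ℂ) + 3)))
      ((((3 - Real.pi) / 4 : ℝ) : ℂ) - Complex.I * (((Real.log 2 - 1) / 2 : ℝ) : ℂ)) := by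
  set f : ℕ → ℂ → ℂ :=
    fun n z => z ^ (n + 1) / (((n : ℂ) + 1) * ((n : ℂ) + 2) * ((n : ℂ) + 3)) with hf
  set u : ℕ → ℝ := fun n => 1 / ((n : ℝ) + 1) ^ 2 with hudef
  have hu : Summable u := by
    have h := (summable_nat_add_iff 1).mpr (Real.summable_one_div_nat_pow.mpr one_lt_two)
    refine h.congr fun n => ?_
    push_cast
    rfl
  have hbound : ∀ (n : ℕ), ∀ z ∈ Metric.closedBall (0 : ℂ) 1, ‖f n z‖ ≤ u n := by
    intro n z hzmem
    have hz1 : ‖z‖ ≤ 1 := by simpa [Metric.mem_closedBall] using hzmem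
    have hden : ‖((n:ℂ)+1) * ((n:ℂ)+2) * ((n:ℂ)+3)‖
        = ((n:ℝ)+1) * ((n:ℝ)+2) * ((n:ℝ)+3) := by
      rw [show ((n:ℂ)+1) * ((n:ℂ)+2) * ((n:ℂ)+3) = (((n+1)*(n+2)*(n+3) : ℕ) : ℂ) by
        push_cast; ring, Complex.norm_natCast]
      push_cast; ring
    rw [hf]
    simp only [norm_div, hden, norm_pow]
    rw [hudef]
    have h1 : ‖z‖ ^ (n+1) ≤ 1 := pow_le_one₀ (norm_nonneg z) hz1
    have h2 : ((n:ℝ)+1)^2 ≤ ((n:ℝ)+1) * ((n:ℝ)+2) * ((n:ℝ)+3) := by nlinarith [Nat.cast_nonneg (α := ℝ) n]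
    exact div_le_div₀ (by positivity) h1 (by positivity) h2
  have hS : ContinuousOn (fun z => ∑' n, f n z) (Metric.closedBall (0 : ℂ) 1) := by
    refine (tendstoUniformlyOn_tsum hu hbound).continuousOn ?_
    apply Filter.Eventually.frequently
    filter_upwards with t
    refine (continuous_finset_sum t fun n _ => ?_).continuousOn
    exact (continuous_pow (n+1)).div_const _
  -- the approximating sequence
  set c : ℕ → ℂ := fun k => ((1 - (((k : ℝ) + 2))⁻¹ : ℝ) : ℂ) * Complex.I with hc
  have hrk : ∀ k : ℕ, 0 < 1 - (((k : ℝ) + 2))⁻¹ := by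
    intro k
    have hk : (0:ℝ) ≤ (k : ℝ) := k.cast_nonneg
    have h2 : (((k : ℝ) + 2))⁻¹ < 1 := by
      rw [inv_lt_one_iff₀]; right; linarith
    linarith
  have hrk1 : ∀ k : ℕ, 1 - (((k : ℝ) + 2))⁻¹ < 1 := by
    intro k
    have hk : (0:ℝ) ≤ (k : ℝ) := k.cast_nonneg
    have : (0:ℝ) < (((k : ℝ) + 2))⁻¹ := by positivity
    linarith
  have hnorm : ∀ k, ‖c k‖ < 1 := by
    intro k
    rw [hc]
    simp only [norm_mul, Complex.norm_I, mul_one, Complex.norm_real, Real.norm_eq_abs]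
    rw [abs_of_pos (hrk k)]
    exact hrk1 k
  have hne : ∀ k, c k ≠ 0 := by
    intro k
    rw [hc]
    simp only [ne_eq, mul_eq_zero, Complex.I_ne_zero, or_false, Complex.ofReal_eq_zero]
    exact ne_of_gt (hrk k)
  have hctend : Filter.Tendsto c Filter.atTop (nhds Complex.I) := by
    have hat : Filter.Tendsto (fun k : ℕ => (k : ℝ) + 2) Filter.atTop Filter.atTop :=
      Filter.tendsto_atTop_add_const_right _ 2 tendsto_natCast_atTop_atTop
    have h2 : Filter.Tendsto (fun k : ℕ => (((k : ℝ) + 2))⁻¹) Filter.atTop (nhds 0) :=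
      hat.inv_tendsto_atTop
    have h0 : Filter.Tendsto (fun k : ℕ => 1 - (((k : ℝ) + 2))⁻¹) Filter.atTop (nhds 1) := by
      simpa using (tendsto_const_nhds (x := (1:ℝ))).sub h2
    have h1 : Filter.Tendsto (fun k : ℕ => ((1 - (((k : ℝ) + 2))⁻¹ : ℝ) : ℂ)) Filter.atTop
        (nhds ((1:ℝ) : ℂ)) := (Complex.continuous_ofReal.tendsto _).comp h0
    have := h1.mul_const Complex.I
    rw [hc]
    simpa using this
  -- tsum is continuous at I along the sequence
  have hmem : ∀ k, c k ∈ Metric.closedBall (0 : ℂ) 1 := fun k => by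
    simpa [Metric.mem_closedBall] using (hnorm k).le
  have hImem : Complex.I ∈ Metric.closedBall (0 : ℂ) 1 := by
    simp [Metric.mem_closedBall]
  have htendS : Filter.Tendsto (fun k => ∑' n, f n (c k)) Filter.atTop
      (nhds (∑' n, f n Complex.I)) := by
    have hwithin : Filter.Tendsto c Filter.atTop (nhdsWithin Complex.I (Metric.closedBall (0:ℂ) 1)) := by
      rw [tendsto_nhdsWithin_iff]
      exact ⟨hctend, Filter.Eventually.of_forall hmem⟩
    exact ((hS Complex.I hImem).tendsto).comp hwithin
  -- closed form along the sequence
  have heq : ∀ k, (∑' n, f n (c k)) = Fc (c k) := fun k =>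
    (closed_form (hnorm k) (hne k)).tsum_eq
  -- Fc is continuous at I
  have hFc : Filter.Tendsto (fun k => Fc (c k)) Filter.atTop (nhds (Fc Complex.I)) := by
    have hslit : (1 : ℂ) - Complex.I ∈ Complex.slitPlane := by
      rw [Complex.mem_slitPlane_iff]
      left
      simp
    have hlog : ContinuousAt (fun z : ℂ => Complex.log (1 - z)) Complex.I :=
      ContinuousAt.clog ((continuous_const.sub continuous_id).continuousAt) hslit
    have hcont : ContinuousAt Fc Complex.I := by
      have hIne : (Complex.I : ℂ) ≠ 0 := Complex.I_ne_zero
      have hI2ne : (2 * Complex.I ^ 2 : ℂ) ≠ 0 := by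
        simp [Complex.I_sq]
      refine ContinuousAt.add (ContinuousAt.sub ?_ ?_) ?_
      · exact continuousAt_const.mul hlog.neg
      · exact ((continuousAt_id.inv₀ hIne)).mul ((hlog.neg).sub continuousAt_id)
      · exact (((continuous_const.mul (continuous_pow 2)).continuousAt).inv₀ hI2ne).mul
          (((hlog.neg).sub continuousAt_id).sub (((continuous_pow 2).div_const 2).continuousAt))
    exact (hcont.tendsto).comp hctend
  have hSI : (∑' n, f n Complex.I) = Fc Complex.I := by
    refine tendsto_nhds_unique htendS ?_
    exact hFc.congr fun k => (heq k).symm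
  have hsumm : Summable (fun n => f n Complex.I) :=
    Summable.of_norm_bounded hu (fun n => hbound n Complex.I hImem)
  have := hsumm.hasSum
  rw [hSI, Fc_I] at this
  exact this
end

section
/- Let a_j = i^{j−1} for j = 1, 2, 3, 4, with indices taken cyclically modulo 4 (a₅ = a₁, a₀ = a₄). For every natural number p, the sum S_p := ∑_{j=1}^4 (−1)^j · a_j^{p+2} · (a_{j+1} − a_{j−1}) / ((a_{j+1} − a_j)·(a_j − a_{j−1})) equals 4i if p ≡ 1 (mod 4), and equals 0 otherwise. -/
/-- The vertices `a_j = i^{j−1}` of the standard quad `(1, i, −1, −i)`, indexed cyclically by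
`j : ℤ` (the formula is automatically `4`-periodic since `i⁴ = 1`). -/
noncomputable def quadVertex (j : ℤ) : ℂ := Complex.I ^ (j - 1)

lemma quad_pow_split (a : ℂ) (ha : a ^ 4 = 1) (k r : ℕ) :
    a ^ (4 * k + r) = a ^ r := by
  rw [pow_add, pow_mul, ha, one_pow, one_mul]

/-- **Weighted power sums at fourth roots of unity.**
For every natural number `p`, the sum
`S_p = ∑_{j=1}^4 (−1)^j a_j^{p+2} (a_{j+1} − a_{j−1})/((a_{j+1} − a_j)(a_j − a_{j−1}))`
equals `4i` if `p ≡ 1 (mod 4)` and `0` otherwise. -/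
theorem weighted_power_sum_roots_of_unity (p : ℕ) :
    ∑ j ∈ Finset.Icc (1 : ℤ) 4,
        (-1 : ℂ) ^ j * (quadVertex j) ^ (p + 2) *
          (quadVertex (j + 1) - quadVertex (j - 1)) /
          ((quadVertex (j + 1) - quadVertex j) * (quadVertex j - quadVertex (j - 1)))
      = if p % 4 = 1 then 4 * Complex.I else 0 := by
  have hIcc : Finset.Icc (1 : ℤ) 4 = {1, 2, 3, 4} := by decide
  have h0 : quadVertex 0 = -Complex.I := by
    simp [quadVertex, zpow_neg, Complex.inv_I]
  have h1 : quadVertex 1 = 1 := by simp [quadVertex]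
  have h2 : quadVertex 2 = Complex.I := by simp [quadVertex]
  have h3 : quadVertex 3 = -1 := by
    simp [quadVertex]
  have h4 : quadVertex 4 = -Complex.I := by
    have : (4 : ℤ) - 1 = 3 := by norm_num
    rw [quadVertex, this, show (3:ℤ) = 2 + 1 by norm_num, zpow_add₀ Complex.I_ne_zero,
      zpow_two, Complex.I_mul_I, zpow_one]
    ring
  have h5 : quadVertex 5 = 1 := by
    have : (5 : ℤ) - 1 = 4 := by norm_num
    rw [quadVertex, this, show (4:ℤ) = (4:ℕ) by norm_num, zpow_natCast, Complex.I_pow_four]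
  have hp : p + 2 = 4 * (p / 4) + (p % 4 + 2) := by omega
  have hI4 : Complex.I ^ 4 = 1 := Complex.I_pow_four
  have hnI4 : (-Complex.I) ^ 4 = 1 := by rw [neg_pow, hI4]; norm_num
  have hm14 : (-1 : ℂ) ^ 4 = 1 := by norm_num
  rw [hIcc]
  norm_num [Finset.sum_insert, Finset.mem_insert, Finset.mem_singleton,
    Finset.sum_singleton, h0, h1, h2, h3, h4, h5]
  rw [hp, quad_pow_split _ hI4, quad_pow_split _ hnI4, quad_pow_split _ hm14]
  have hr : p % 4 = 0 ∨ p % 4 = 1 ∨ p % 4 = 2 ∨ p % 4 = 3 := by omega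
  have hI3 : Complex.I ^ 3 = -Complex.I := by
    rw [pow_succ, Complex.I_sq]; ring
  have hI5 : Complex.I ^ 5 = Complex.I := by
    rw [show (5:ℕ) = 4+1 from rfl, pow_succ, hI4, one_mul]
  rcases hr with h | h | h | h <;> rw [h] <;> norm_num <;>
    (try ring_nf) <;>
    (try simp [Complex.I_sq, hI3, hI4, hI5]) <;> (try ring)
end

section
/- Let μ : ℍ → ℂ be a measurable function on the open upper half-plane ℍ = {ζ ∈ ℂ : Im ζ > 0} such that ∫_ℍ |μ(ζ)|²·(Im ζ)^{−2} dA(ζ) < ∞. Define F on the open lower half-plane ℍ* = {z ∈ ℂ : Im z < 0} by F(z) = ∫_ℍ μ(ζ)·(ζ − z)^{−4} dA(ζ). Then ∫_{ℍ*} |F(z)|²·(Im z)² dA(z) ≤ (π²/16) · ∫_ℍ |μ(ζ)|²·(Im ζ)^{−2} dA(ζ). -/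
open MeasureTheory

open Real Filter Topology
open scoped ENNReal

lemma intA0_integrable {b : ℝ} (hb : 0 < b) :
    Integrable (fun x : ℝ => ((x ^ 2 + b ^ 2) ^ 2)⁻¹) := by
  have hci : Integrable (fun x : ℝ => (b ^ 2 * min 1 (b ^ 2))⁻¹ * (1 + x ^ 2)⁻¹) :=
    integrable_inv_one_add_sq.const_mul _
  have hcont : Continuous fun x : ℝ => ((x ^ 2 + b ^ 2) ^ 2)⁻¹ :=
    (((continuous_pow 2).add continuous_const).pow 2).inv₀ (fun x => (pow_ne_zero 2 (by positivity : (0:ℝ) < x ^ 2 + b ^ 2).ne' : (x ^ 2 + b ^ 2) ^ 2 ≠ 0))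
  refine hci.mono' hcont.aestronglyMeasurable (Filter.Eventually.of_forall fun x => ?_)
  have h1 : ‖((x ^ 2 + b ^ 2) ^ 2)⁻¹‖ = ((x ^ 2 + b ^ 2) ^ 2)⁻¹ := by
    rw [Real.norm_eq_abs, abs_of_nonneg]; positivity
  rw [h1, ← mul_inv]
  have hmin : 0 < min 1 (b ^ 2) := lt_min one_pos (by positivity)
  apply inv_anti₀ (by positivity)
  rcases le_total (b ^ 2) 1 with h | h
  · rw [min_eq_right h]
    nlinarith [sq_nonneg x, sq_nonneg (x*b), hb.le]
  · rw [min_eq_left h]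
    nlinarith [sq_nonneg x, sq_nonneg (x*b), hb.le]

lemma intA0 {b : ℝ} (hb : 0 < b) :
    ∫ x : ℝ, ((x ^ 2 + b ^ 2) ^ 2)⁻¹ = π / (2 * b ^ 3) := by
  have hb2 : ∀ x : ℝ, x ^ 2 + b ^ 2 ≠ 0 := by
    intro x; positivity
  set G : ℝ → ℝ := fun x => x / (2 * b ^ 2 * (x ^ 2 + b ^ 2)) + arctan (x / b) / (2 * b ^ 3)
    with hG
  have hderiv : ∀ x : ℝ, HasDerivAt G (((x ^ 2 + b ^ 2) ^ 2)⁻¹) x := by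
    intro x
    have h1 : HasDerivAt (fun x : ℝ => x / (2 * b ^ 2 * (x ^ 2 + b ^ 2)))
        ((1 * (2 * b ^ 2 * (x ^ 2 + b ^ 2)) - x * (2 * b ^ 2 * (2 * x)))
          / (2 * b ^ 2 * (x ^ 2 + b ^ 2)) ^ 2) x := by
      have hd : HasDerivAt (fun x : ℝ => 2 * b ^ 2 * (x ^ 2 + b ^ 2)) (2 * b ^ 2 * (2 * x)) x := by
        have : HasDerivAt (fun x : ℝ => x ^ 2 + b ^ 2) (2 * x) x := by
          simpa using ((hasDerivAt_pow 2 x).add_const (b ^ 2))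
        exact this.const_mul _
      exact (hasDerivAt_id x).div hd (by positivity)
    have h2 : HasDerivAt (fun x : ℝ => arctan (x / b) / (2 * b ^ 3))
        ((1 / (1 + (x / b) ^ 2) * (1 / b)) / (2 * b ^ 3)) x := by
      have hdiv : HasDerivAt (fun x : ℝ => x / b) (1 / b) x := by
        simpa using (hasDerivAt_id x).div_const b
      exact ((Real.hasDerivAt_arctan (x / b)).comp x hdiv).div_const _
    have := h1.add h2
    refine this.congr_deriv ?_
    have h1b : (1 : ℝ) + (x / b) ^ 2 ≠ 0 := by positivity
    field_simp
    ring
  have hxlim : Tendsto (fun x : ℝ => x / (2 * b ^ 2 * (x ^ 2 + b ^ 2))) atTop (𝓝 0) := by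
    have : (fun x : ℝ => x / (2 * b ^ 2 * (x ^ 2 + b ^ 2)))
        =ᶠ[atTop] fun x => x⁻¹ / (2 * b ^ 2 * (1 + b ^ 2 * (x⁻¹) ^ 2)) := by
      filter_upwards [eventually_gt_atTop 0] with x hx
      field_simp
    rw [tendsto_congr' this]
    have h0 : Tendsto (fun x : ℝ => x⁻¹) atTop (𝓝 0) := tendsto_inv_atTop_zero
    have hden : Tendsto (fun x : ℝ => 2 * b ^ 2 * (1 + b ^ 2 * (x⁻¹) ^ 2)) atTop
        (𝓝 (2 * b ^ 2 * (1 + b ^ 2 * 0 ^ 2))) := by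
      exact (tendsto_const_nhds.mul ((tendsto_const_nhds.add
        (tendsto_const_nhds.mul ((h0.pow 2)))))).congr (fun x => rfl)
    have := h0.div hden (by simp; positivity)
    rw [zero_div] at this; exact this
  have hxlim' : Tendsto (fun x : ℝ => x / (2 * b ^ 2 * (x ^ 2 + b ^ 2))) atBot (𝓝 0) := by
    have : (fun x : ℝ => x / (2 * b ^ 2 * (x ^ 2 + b ^ 2)))
        =ᶠ[atBot] fun x => x⁻¹ / (2 * b ^ 2 * (1 + b ^ 2 * (x⁻¹) ^ 2)) := by
      filter_upwards [eventually_lt_atBot 0] with x hx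
      have hx0 : x ≠ 0 := hx.ne
      field_simp
    rw [tendsto_congr' this]
    have h0 : Tendsto (fun x : ℝ => x⁻¹) atBot (𝓝 0) := by
      have h := (tendsto_neg_atBot_atTop (G := ℝ)).inv_tendsto_atTop.neg
      simp only [Pi.inv_apply, Pi.neg_apply, inv_neg, neg_neg, neg_zero] at h
      exact h
    have hden : Tendsto (fun x : ℝ => 2 * b ^ 2 * (1 + b ^ 2 * (x⁻¹) ^ 2)) atBot
        (𝓝 (2 * b ^ 2 * (1 + b ^ 2 * 0 ^ 2))) :=
      (tendsto_const_nhds.mul ((tendsto_const_nhds.add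
        (tendsto_const_nhds.mul ((h0.pow 2))))))
    have := h0.div hden (by simp; positivity)
    rw [zero_div] at this; exact this
  have harcTop : Tendsto (fun x : ℝ => arctan (x / b) / (2 * b ^ 3)) atTop
      (𝓝 ((π / 2) / (2 * b ^ 3))) := by
    have hb' : Tendsto (fun x : ℝ => x / b) atTop atTop := tendsto_id.atTop_div_const hb
    exact ((tendsto_nhds_of_tendsto_nhdsWithin Real.tendsto_arctan_atTop).comp hb').div_const _
  have harcBot : Tendsto (fun x : ℝ => arctan (x / b) / (2 * b ^ 3)) atBot
      (𝓝 ((-(π / 2)) / (2 * b ^ 3))) := by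
    have hb' : Tendsto (fun x : ℝ => x / b) atBot atBot := tendsto_id.atBot_div_const hb
    exact ((tendsto_nhds_of_tendsto_nhdsWithin Real.tendsto_arctan_atBot).comp hb').div_const _
  have htop : Tendsto G atTop (𝓝 (0 + (π / 2) / (2 * b ^ 3))) := hxlim.add harcTop
  have hbot : Tendsto G atBot (𝓝 (0 + (-(π / 2)) / (2 * b ^ 3))) := hxlim'.add harcBot
  have := integral_of_hasDerivAt_of_tendsto hderiv (intA0_integrable hb) hbot htop
  rw [this]
  field_simp
  ring

lemma intA {a b : ℝ} (hb : 0 < b) :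
    ∫ x : ℝ, (((x - a) ^ 2 + b ^ 2) ^ 2)⁻¹ = π / (2 * b ^ 3) := by
  rw [integral_sub_right_eq_self (fun x : ℝ => ((x ^ 2 + b ^ 2) ^ 2)⁻¹) a]
  exact intA0 hb

lemma intB_aux {t : ℝ} (ht : 0 < t) :
    IntegrableOn (fun y => y / (y + t) ^ 3) (Set.Ioi (0:ℝ)) ∧
    ∫ y in Set.Ioi (0:ℝ), y / (y + t) ^ 3 = 1 / (2 * t) := by
  have hne : ∀ y : ℝ, 0 ≤ y → y + t ≠ 0 := fun y hy => by positivity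
  set G : ℝ → ℝ := fun y => -(y + t)⁻¹ + (t / 2) * ((y + t) ^ 2)⁻¹ with hG
  have hderiv : ∀ y ∈ Set.Ioi (0:ℝ), HasDerivAt G (y / (y + t) ^ 3) y := by
    intro y hy
    have hy0 : (0:ℝ) < y := hy
    have hyt : y + t ≠ 0 := by positivity
    have h1 : HasDerivAt (fun y : ℝ => (y + t)⁻¹) (-1 / (y + t) ^ 2) y := by
      have := ((hasDerivAt_id y).add_const t).inv hyt
      exact this
    have h2 : HasDerivAt (fun y : ℝ => ((y + t) ^ 2)⁻¹) (-(2 * (y + t)) / ((y + t) ^ 2) ^ 2) y := by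
      have hp : HasDerivAt (fun y : ℝ => (y + t) ^ 2) (2 * (y + t)) y := by
        have := ((hasDerivAt_id y).add_const t).pow 2
        exact (by simpa using this : HasDerivAt ((fun x => x + t) ^ 2) (2 * (y + t)) y)
      exact hp.inv (by positivity)
    have := (h1.neg).add ((h2.const_mul (t / 2)))
    refine this.congr_deriv ?_
    field_simp
    ring
  have hcont : ContinuousWithinAt G (Set.Ici 0) 0 := by
    apply ContinuousAt.continuousWithinAt
    have h0 : (0:ℝ) + t ≠ 0 := by positivity
    fun_prop (disch := positivity)
  have hpos : ∀ y ∈ Set.Ioi (0:ℝ), 0 ≤ y / (y + t) ^ 3 := fun y hy => by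
    have : (0:ℝ) < y := hy
    positivity
  have hlim : Filter.Tendsto G Filter.atTop (𝓝 0) := by
    have h1 : Filter.Tendsto (fun y : ℝ => (y + t)⁻¹) Filter.atTop (𝓝 0) :=
      (Filter.tendsto_atTop_add_const_right _ t Filter.tendsto_id).inv_tendsto_atTop
    have h2 : Filter.Tendsto (fun y : ℝ => ((y + t) ^ 2)⁻¹) Filter.atTop (𝓝 0) :=
      (((tendsto_pow_atTop (two_ne_zero)).comp
        (Filter.tendsto_atTop_add_const_right _ t Filter.tendsto_id))).inv_tendsto_atTop
    have := (h1.neg).add (h2.const_mul (t / 2))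
    simpa using this
  refine ⟨integrableOn_Ioi_deriv_of_nonneg hcont hderiv hpos hlim, ?_⟩
  have := integral_Ioi_of_hasDerivAt_of_nonneg hcont hderiv hpos hlim
  rw [this, hG]
  simp only
  field_simp
  ring

lemma intA_integrable {a b : ℝ} (hb : 0 < b) :
    Integrable (fun x : ℝ => (((x - a) ^ 2 + b ^ 2) ^ 2)⁻¹) := by
  have := (intA0_integrable hb).comp_sub_right a
  simpa using this

lemma lintA {a b : ℝ} (hb : 0 < b) :
    ∫⁻ x : ℝ, ENNReal.ofReal ((((x - a) ^ 2 + b ^ 2) ^ 2)⁻¹)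
      = ENNReal.ofReal (π / (2 * b ^ 3)) := by
  rw [← ofReal_integral_eq_lintegral_ofReal (intA_integrable hb)
    (Filter.Eventually.of_forall fun x => by positivity), intA hb]

lemma keyUpper {c : ℂ} (hc : c.im < 0) :
    ∫⁻ ζ in {w : ℂ | 0 < w.im},
        ENNReal.ofReal (ζ.im * ((‖ζ - c‖) ^ 4)⁻¹)
      = ENNReal.ofReal (π / (4 * (-c.im))) := by
  set t : ℝ := -c.im with ht'
  have ht : 0 < t := by rw [ht']; linarith
  have hset : MeasurableSet {w : ℂ | 0 < w.im} :=
    measurableSet_lt measurable_const Complex.measurable_im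
  set f : ℂ → ℝ≥0∞ := fun ζ => ENNReal.ofReal (ζ.im * ((‖ζ - c‖) ^ 4)⁻¹) with hf
  set F : ℝ × ℝ → ℝ≥0∞ := fun p =>
    (Set.Ioi (0:ℝ)).indicator
      (fun y => ENNReal.ofReal (y * (((p.1 - c.re) ^ 2 + (y + t) ^ 2) ^ 2)⁻¹)) p.2 with hF
  have key : ∀ p : ℝ × ℝ,
      ({w : ℂ | 0 < w.im}).indicator f (Complex.measurableEquivRealProd.symm p) = F p := by
    intro p
    have him : (Complex.measurableEquivRealProd.symm p).im = p.2 := rfl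
    have hre : (Complex.measurableEquivRealProd.symm p).re = p.1 := rfl
    have habs : (‖Complex.measurableEquivRealProd.symm p - c‖) ^ 4
        = ((p.1 - c.re) ^ 2 + (p.2 + t) ^ 2) ^ 2 := by
      have : (‖Complex.measurableEquivRealProd.symm p - c‖) ^ 4
          = (Complex.normSq (Complex.measurableEquivRealProd.symm p - c)) ^ 2 := by
        rw [← Complex.sq_norm]; ring
      rw [this, Complex.normSq_apply, Complex.sub_re, Complex.sub_im, him, hre, ht']
      ring
    simp only [hF, hf]
    by_cases hp : 0 < p.2
    · rw [Set.indicator_of_mem (by simpa [him] using hp),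
        Set.indicator_of_mem (by exact hp : p.2 ∈ Set.Ioi (0:ℝ))]
      simp only [him, habs]
    · rw [Set.indicator_of_notMem (by simpa [him] using hp),
        Set.indicator_of_notMem (by simpa using hp)]
  have hFmeas : Measurable F := by
    have : F = Set.indicator {p : ℝ × ℝ | 0 < p.2}
        (fun p => ENNReal.ofReal (p.2 * (((p.1 - c.re) ^ 2 + (p.2 + t) ^ 2) ^ 2)⁻¹)) := by
      funext p
      simp only [hF]
      by_cases hp : 0 < p.2
      · rw [Set.indicator_of_mem (by exact hp : p.2 ∈ Set.Ioi (0:ℝ)),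
          Set.indicator_of_mem (by exact hp : p ∈ {p : ℝ × ℝ | 0 < p.2})]
      · rw [Set.indicator_of_notMem (by simpa using hp),
          Set.indicator_of_notMem (by simpa using hp)]
    rw [this]
    apply Measurable.indicator _ (measurableSet_lt measurable_const measurable_snd)
    apply ENNReal.measurable_ofReal.comp
    apply Measurable.mul measurable_snd
    apply Measurable.inv
    apply Measurable.pow _ measurable_const
    exact (((measurable_fst.sub measurable_const).pow measurable_const).add
      ((measurable_snd.add measurable_const).pow measurable_const))
  calc ∫⁻ ζ in {w : ℂ | 0 < w.im}, f ζ
      = ∫⁻ ζ, ({w : ℂ | 0 < w.im}).indicator f ζ := (lintegral_indicator hset f).symm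
    _ = ∫⁻ p : ℝ × ℝ, ({w : ℂ | 0 < w.im}).indicator f
          (Complex.measurableEquivRealProd.symm p) :=
        MeasurePreserving.lintegral_map_equiv _ _
          Complex.volume_preserving_equiv_real_prod.symm
    _ = ∫⁻ p : ℝ × ℝ, F p := lintegral_congr key
    _ = ∫⁻ y : ℝ, ∫⁻ x : ℝ, F (x, y) := by
        rw [Measure.volume_eq_prod, lintegral_prod_symm _ hFmeas.aemeasurable]
    _ = ∫⁻ y : ℝ, (Set.Ioi (0:ℝ)).indicator
          (fun y => ENNReal.ofReal (π / 2 * (y / (y + t) ^ 3))) y := by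
        apply lintegral_congr
        intro y
        by_cases hy : 0 < y
        · rw [Set.indicator_of_mem (by exact hy : y ∈ Set.Ioi (0:ℝ))]
          have hyt : 0 < y + t := by linarith
          calc ∫⁻ x : ℝ, F (x, y)
              = ∫⁻ x : ℝ, ENNReal.ofReal y
                  * ENNReal.ofReal ((((x - c.re) ^ 2 + (y + t) ^ 2) ^ 2)⁻¹) := by
                apply lintegral_congr
                intro x
                simp only [hF]
                rw [Set.indicator_of_mem (by exact hy : y ∈ Set.Ioi (0:ℝ)),
                  ENNReal.ofReal_mul hy.le]
            _ = ENNReal.ofReal y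
                  * ∫⁻ x : ℝ, ENNReal.ofReal ((((x - c.re) ^ 2 + (y + t) ^ 2) ^ 2)⁻¹) := by
                apply lintegral_const_mul
                apply ENNReal.measurable_ofReal.comp
                apply Measurable.inv
                apply Measurable.pow _ measurable_const
                exact (((measurable_id.sub measurable_const).pow measurable_const).add
                  measurable_const)
            _ = ENNReal.ofReal y * ENNReal.ofReal (π / (2 * (y + t) ^ 3)) := by
                rw [lintA hyt]
            _ = ENNReal.ofReal (π / 2 * (y / (y + t) ^ 3)) := by
                rw [← ENNReal.ofReal_mul hy.le]
                congr 1
                field_simp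
        · rw [Set.indicator_of_notMem (by simpa using hy)]
          have : ∀ x : ℝ, F (x, y) = 0 := by
            intro x
            simp only [hF]
            rw [Set.indicator_of_notMem (by simpa using hy)]
          simp only [this, lintegral_zero]
    _ = ∫⁻ y in Set.Ioi (0:ℝ), ENNReal.ofReal (π / 2 * (y / (y + t) ^ 3)) :=
        lintegral_indicator measurableSet_Ioi _
    _ = ENNReal.ofReal (π / (4 * t)) := by
        have hnn : 0 ≤ᵐ[volume.restrict (Set.Ioi (0:ℝ))]
            fun y => π / 2 * (y / (y + t) ^ 3) := by
          refine (ae_restrict_iff' measurableSet_Ioi).2 (Filter.Eventually.of_forall ?_)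
          intro y hy
          have hy' : (0:ℝ) < y := hy
          have : (0:ℝ) < y + t := by linarith
          positivity
        rw [← ofReal_integral_eq_lintegral_ofReal
          (((intB_aux ht).1).const_mul (π / 2)) hnn]
        rw [integral_const_mul, (intB_aux ht).2]
        congr 1
        rw [div_mul_div_comm, mul_one]
        ring_nf

lemma keyLower {c : ℂ} (hc : 0 < c.im) :
    ∫⁻ z in {w : ℂ | w.im < 0},
        ENNReal.ofReal ((-z.im) * ((‖c - z‖) ^ 4)⁻¹)
      = ENNReal.ofReal (π / (4 * c.im)) := by
  have hmp : MeasurePreserving (Neg.neg : ℂ → ℂ) volume volume :=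
    Measure.measurePreserving_neg _
  have hemb : MeasurableEmbedding (Neg.neg : ℂ → ℂ) :=
    (MeasurableEquiv.neg ℂ).measurableEmbedding
  have hpre : (Neg.neg : ℂ → ℂ) ⁻¹' {w : ℂ | 0 < w.im} = {w : ℂ | w.im < 0} := by
    ext w
    simp [Complex.neg_im]
  have h := hmp.setLIntegral_comp_preimage_emb hemb
    (fun w => ENNReal.ofReal (w.im * ((‖w - (-c)‖) ^ 4)⁻¹)) {w : ℂ | 0 < w.im}
  rw [hpre] at h
  have heq : ∀ z : ℂ,
      ENNReal.ofReal ((-z).im * ((‖(-z) - (-c)‖) ^ 4)⁻¹)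
        = ENNReal.ofReal ((-z.im) * ((‖c - z‖) ^ 4)⁻¹) := by
    intro z
    rw [Complex.neg_im, show (-z) - (-c) = c - z from by ring]
  calc ∫⁻ z in {w : ℂ | w.im < 0}, ENNReal.ofReal ((-z.im) * ((‖c - z‖) ^ 4)⁻¹)
      = ∫⁻ z in {w : ℂ | w.im < 0},
          ENNReal.ofReal ((-z).im * ((‖(-z) - (-c)‖) ^ 4)⁻¹) := by
        exact lintegral_congr fun z => (heq z).symm
    _ = ∫⁻ w in {w : ℂ | 0 < w.im},
          ENNReal.ofReal (w.im * ((‖w - (-c)‖) ^ 4)⁻¹) := h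
    _ = ENNReal.ofReal (π / (4 * c.im)) := by
        rw [keyUpper (by simp [Complex.neg_im]; linarith)]
        simp [Complex.neg_im]

lemma pointwise_bound (μ : ℂ → ℂ) (hmeas : Measurable μ) {z : ℂ} (hz : z.im < 0) :
    ENNReal.ofReal
        (‖∫ ζ in {w : ℂ | 0 < w.im}, μ ζ * (ζ - z) ^ (-4 : ℤ)‖ ^ 2 * z.im ^ 2)
      ≤ (∫⁻ ζ in {w : ℂ | 0 < w.im},
            ENNReal.ofReal ((‖μ ζ‖ ^ 2 / ζ.im ^ 2)
              * (ζ.im * ((‖ζ - z‖) ^ 4)⁻¹)))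
          * ENNReal.ofReal (π / 4 * (-z.im)) := by
  set S := {w : ℂ | 0 < w.im} with hS
  have hSm : MeasurableSet S := measurableSet_lt measurable_const Complex.measurable_im
  set t : ℝ := -z.im with ht'
  have ht : 0 < t := by rw [ht']; linarith
  set φ : ℂ → ℝ≥0∞ := fun ζ =>
    ENNReal.ofReal (‖μ ζ‖ / ζ.im * Real.sqrt ζ.im
      * ((‖ζ - z‖) ^ 2)⁻¹) with hφ
  set ψ : ℂ → ℝ≥0∞ := fun ζ =>
    ENNReal.ofReal (Real.sqrt ζ.im * ((‖ζ - z‖) ^ 2)⁻¹) with hψ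
  have habs : Measurable fun ζ : ℂ => ‖ζ - z‖ :=
    (continuous_norm.comp (continuous_id.sub continuous_const)).measurable
  have hφm : Measurable φ := by
    apply ENNReal.measurable_ofReal.comp
    exact (((continuous_norm.measurable.comp hmeas).div Complex.measurable_im).mul
      (Real.continuous_sqrt.measurable.comp Complex.measurable_im)).mul
      ((habs.pow measurable_const).inv)
  have hψm : Measurable ψ := by
    apply ENNReal.measurable_ofReal.comp
    exact (Real.continuous_sqrt.measurable.comp Complex.measurable_im).mul
      ((habs.pow measurable_const).inv)
  have hconj : (2:ℝ).HolderConjugate 2 := by constructor <;> norm_num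
  have hCS := ENNReal.lintegral_mul_le_Lp_mul_Lq (volume.restrict S) hconj
    hφm.aemeasurable hψm.aemeasurable
  -- identify the three integrals
  have hprod : ∫⁻ ζ in S, (φ * ψ) ζ
      = ∫⁻ ζ in S, ENNReal.ofReal (‖μ ζ‖ * ((‖ζ - z‖) ^ 4)⁻¹) := by
    apply setLIntegral_congr_fun hSm
    intro ζ hζ
    have hy : (0:ℝ) < ζ.im := hζ
    simp only [Pi.mul_apply, hφ, hψ]
    rw [← ENNReal.ofReal_mul (by positivity)]
    congr 1
    rw [show ‖μ ζ‖ / ζ.im * Real.sqrt ζ.im * ((‖ζ - z‖) ^ 2)⁻¹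
          * (Real.sqrt ζ.im * ((‖ζ - z‖) ^ 2)⁻¹)
        = ‖μ ζ‖ * ((Real.sqrt ζ.im * Real.sqrt ζ.im) / ζ.im)
          * ((‖ζ - z‖) ^ 4)⁻¹ from by ring,
      Real.mul_self_sqrt hy.le, div_self hy.ne', mul_one]
  have hφ2 : ∫⁻ ζ in S, φ ζ ^ (2:ℝ)
      = ∫⁻ ζ in S, ENNReal.ofReal ((‖μ ζ‖ ^ 2 / ζ.im ^ 2)
          * (ζ.im * ((‖ζ - z‖) ^ 4)⁻¹)) := by
    apply setLIntegral_congr_fun hSm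
    intro ζ hζ
    have hy : (0:ℝ) < ζ.im := hζ
    simp only [hφ]
    rw [show (2:ℝ) = ((2:ℕ):ℝ) from by norm_num, ENNReal.rpow_natCast,
      ← ENNReal.ofReal_pow (by positivity)]
    congr 1
    rw [show (‖μ ζ‖ / ζ.im * Real.sqrt ζ.im * ((‖ζ - z‖) ^ 2)⁻¹) ^ 2
        = ‖μ ζ‖ ^ 2 / ζ.im ^ 2 * (Real.sqrt ζ.im * Real.sqrt ζ.im)
          * ((‖ζ - z‖) ^ 4)⁻¹ from by ring,
      Real.mul_self_sqrt hy.le]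
    ring
  have hψ2 : ∫⁻ ζ in S, ψ ζ ^ (2:ℝ) = ENNReal.ofReal (π / (4 * t)) := by
    have : ∫⁻ ζ in S, ψ ζ ^ (2:ℝ)
        = ∫⁻ ζ in S, ENNReal.ofReal (ζ.im * ((‖ζ - z‖) ^ 4)⁻¹) := by
      apply setLIntegral_congr_fun hSm
      intro ζ hζ
      have hy : (0:ℝ) < ζ.im := hζ
      simp only [hψ]
      rw [show (2:ℝ) = ((2:ℕ):ℝ) from by norm_num, ENNReal.rpow_natCast,
        ← ENNReal.ofReal_pow (by positivity)]
      congr 1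
      rw [show (Real.sqrt ζ.im * ((‖ζ - z‖) ^ 2)⁻¹) ^ 2
          = Real.sqrt ζ.im * Real.sqrt ζ.im * ((‖ζ - z‖) ^ 4)⁻¹ from by ring,
        Real.mul_self_sqrt hy.le]
    rw [this, hS, keyUpper hz, ht']
  set A : ℝ≥0∞ := ∫⁻ ζ in S, ENNReal.ofReal ((‖μ ζ‖ ^ 2 / ζ.im ^ 2)
      * (ζ.im * ((‖ζ - z‖) ^ 4)⁻¹)) with hA
  -- norm bound on F
  set F : ℂ := ∫ ζ in S, μ ζ * (ζ - z) ^ (-4 : ℤ) with hFdef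
  have hnorm : ENNReal.ofReal (‖F‖)
      ≤ A ^ (1/2 : ℝ) * (ENNReal.ofReal (π / (4 * t))) ^ (1/2 : ℝ) := by
    have h1 : (‖F‖₊ : ℝ≥0∞) ≤ ∫⁻ ζ in S, ‖μ ζ * (ζ - z) ^ (-4 : ℤ)‖₊ :=
      enorm_integral_le_lintegral_enorm _
    have h2 : ∀ ζ : ℂ, (‖μ ζ * (ζ - z) ^ (-4 : ℤ)‖₊ : ℝ≥0∞)
        = ENNReal.ofReal (‖μ ζ‖ * ((‖ζ - z‖) ^ 4)⁻¹) := by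
      intro ζ
      rw [← enorm_eq_nnnorm, ← ofReal_norm]
      congr 1
      rw [norm_mul, norm_zpow]
      congr 1
    have h3 : ENNReal.ofReal (‖F‖) = (‖F‖₊ : ℝ≥0∞) := by
      rw [← enorm_eq_nnnorm, ← ofReal_norm]
    rw [h3]
    refine h1.trans ?_
    have h4 : ∫⁻ ζ in S, (‖μ ζ * (ζ - z) ^ (-4 : ℤ)‖₊ : ℝ≥0∞) = ∫⁻ ζ in S, (φ * ψ) ζ := by
      rw [hprod]
      exact lintegral_congr fun ζ => h2 ζ
    rw [h4]
    refine hCS.trans ?_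
    rw [hφ2, hψ2]
  -- square the bound
  have hsq : ENNReal.ofReal (‖F‖ ^ 2)
      ≤ A * ENNReal.ofReal (π / (4 * t)) := by
    have h5 : ENNReal.ofReal (‖F‖ ^ 2) = (ENNReal.ofReal (‖F‖)) ^ 2 := by
      rw [← ENNReal.ofReal_pow (by positivity)]
    rw [h5]
    calc (ENNReal.ofReal (‖F‖)) ^ 2
        ≤ (A ^ (1/2 : ℝ) * (ENNReal.ofReal (π / (4 * t))) ^ (1/2 : ℝ)) ^ 2 := by
          exact pow_le_pow_left' hnorm 2
      _ = A * ENNReal.ofReal (π / (4 * t)) := by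
          rw [mul_pow, ← ENNReal.rpow_natCast (A ^ (1/2 : ℝ)) 2,
            ← ENNReal.rpow_natCast ((ENNReal.ofReal (π / (4 * t))) ^ (1/2 : ℝ)) 2,
            ← ENNReal.rpow_mul, ← ENNReal.rpow_mul]
          norm_num
  -- conclude
  have him2 : z.im ^ 2 = t ^ 2 := by rw [ht']; ring
  calc ENNReal.ofReal (‖F‖ ^ 2 * z.im ^ 2)
      = ENNReal.ofReal (‖F‖ ^ 2) * ENNReal.ofReal (t ^ 2) := by
        rw [← ENNReal.ofReal_mul (by positivity), him2]
    _ ≤ A * ENNReal.ofReal (π / (4 * t)) * ENNReal.ofReal (t ^ 2) :=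
        mul_le_mul_left hsq _
    _ = A * ENNReal.ofReal (π / 4 * t) := by
        rw [mul_assoc, ← ENNReal.ofReal_mul (by positivity)]
        congr 2
        field_simp
/-- **L² boundedness of the infinitesimal Bers embedding.**
Let `μ` be measurable on the upper half-plane `ℍ` with `∫_ℍ |μ(ζ)|² (Im ζ)^{−2} dA(ζ) < ∞`,
and let `F(z) = ∫_ℍ μ(ζ)(ζ − z)^{−4} dA(ζ)` on the lower half-plane `ℍ*`. Then
`∫_{ℍ*} |F(z)|² (Im z)² dA(z) ≤ (π²/16) ∫_ℍ |μ(ζ)|² (Im ζ)^{−2} dA(ζ)`. -/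
theorem bers_embedding_L2_bound (μ : ℂ → ℂ) (hmeas : Measurable μ)
    (hint : ∫⁻ ζ in {w : ℂ | 0 < w.im},
        ENNReal.ofReal (‖μ ζ‖ ^ 2 / ζ.im ^ 2) < ⊤) :
    ∫⁻ z in {w : ℂ | w.im < 0},
        ENNReal.ofReal
          (‖∫ ζ in {w : ℂ | 0 < w.im}, μ ζ * (ζ - z) ^ (-4 : ℤ)‖ ^ 2 * z.im ^ 2)
      ≤ ENNReal.ofReal (Real.pi ^ 2 / 16) *
          ∫⁻ ζ in {w : ℂ | 0 < w.im}, ENNReal.ofReal (‖μ ζ‖ ^ 2 / ζ.im ^ 2) := by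
  clear hint
  set S := {w : ℂ | 0 < w.im} with hS
  set L := {w : ℂ | w.im < 0} with hL
  have hSm : MeasurableSet S := measurableSet_lt measurable_const Complex.measurable_im
  have hLm : MeasurableSet L := measurableSet_lt Complex.measurable_im measurable_const
  set H : ℂ → ℂ → ℝ≥0∞ := fun z ζ =>
    ENNReal.ofReal ((π / 4 * (-z.im)) * ((‖μ ζ‖ ^ 2 / ζ.im ^ 2)
      * (ζ.im * ((‖ζ - z‖) ^ 4)⁻¹))) with hH
  have hHmeas : Measurable (Function.uncurry H) := by
    apply ENNReal.measurable_ofReal.comp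
    have m1 : Measurable fun p : ℂ × ℂ => p.1.im := Complex.measurable_im.comp measurable_fst
    have m2 : Measurable fun p : ℂ × ℂ => p.2.im := Complex.measurable_im.comp measurable_snd
    have m3 : Measurable fun p : ℂ × ℂ => ‖μ p.2‖ :=
      continuous_norm.measurable.comp (hmeas.comp measurable_snd)
    have m4 : Measurable fun p : ℂ × ℂ => ‖p.2 - p.1‖ :=
      continuous_norm.measurable.comp (measurable_snd.sub measurable_fst)
    exact ((measurable_const.mul m1.neg)).mul
      (((m3.pow measurable_const).div (m2.pow measurable_const)).mul
        ((m2.mul ((m4.pow measurable_const).inv))))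
  have hinner_meas : ∀ z : ℂ, Measurable fun ζ : ℂ =>
      ENNReal.ofReal ((‖μ ζ‖ ^ 2 / ζ.im ^ 2)
        * (ζ.im * ((‖ζ - z‖) ^ 4)⁻¹)) := by
    intro z
    have := hHmeas.comp (measurable_prodMk_left (x := z))
    -- fallback: direct construction
    apply ENNReal.measurable_ofReal.comp
    have m3 : Measurable fun ζ : ℂ => ‖μ ζ‖ :=
      continuous_norm.measurable.comp hmeas
    have m4 : Measurable fun ζ : ℂ => ‖ζ - z‖ :=
      continuous_norm.measurable.comp (measurable_id.sub measurable_const)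
    exact ((m3.pow measurable_const).div (Complex.measurable_im.pow measurable_const)).mul
      (Complex.measurable_im.mul ((m4.pow measurable_const).inv))
  calc ∫⁻ z in L, ENNReal.ofReal
          (‖∫ ζ in S, μ ζ * (ζ - z) ^ (-4 : ℤ)‖ ^ 2 * z.im ^ 2)
      ≤ ∫⁻ z in L, (∫⁻ ζ in S, ENNReal.ofReal ((‖μ ζ‖ ^ 2 / ζ.im ^ 2)
            * (ζ.im * ((‖ζ - z‖) ^ 4)⁻¹)))
          * ENNReal.ofReal (π / 4 * (-z.im)) := by
        apply setLIntegral_mono' hLm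
        intro z hz
        exact pointwise_bound μ hmeas hz
    _ = ∫⁻ z in L, ∫⁻ ζ in S, H z ζ := by
        apply setLIntegral_congr_fun hLm
        intro z hz
        have hz' : z.im < 0 := hz
        beta_reduce
        rw [mul_comm, ← lintegral_const_mul (ENNReal.ofReal (π / 4 * (-z.im))) (hinner_meas z)]
        apply lintegral_congr
        intro ζ
        rw [hH]
        rw [← ENNReal.ofReal_mul (mul_nonneg (by positivity) (by linarith))]
    _ = ∫⁻ ζ in S, ∫⁻ z in L, H z ζ := lintegral_lintegral_swap hHmeas.aemeasurable
    _ = ∫⁻ ζ in S, ENNReal.ofReal (π ^ 2 / 16)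
          * ENNReal.ofReal (‖μ ζ‖ ^ 2 / ζ.im ^ 2) := by
        apply setLIntegral_congr_fun hSm
        intro ζ hζ
        have hy : (0:ℝ) < ζ.im := hζ
        have hzl : Measurable fun z : ℂ =>
            ENNReal.ofReal ((-z.im) * ((‖ζ - z‖) ^ 4)⁻¹) := by
          apply ENNReal.measurable_ofReal.comp
          have m4 : Measurable fun z : ℂ => ‖ζ - z‖ :=
            continuous_norm.measurable.comp (measurable_const.sub measurable_id)
          exact (Complex.measurable_im.neg).mul ((m4.pow measurable_const).inv)
        have hsplit : ∀ z ∈ L, H z ζ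
            = ENNReal.ofReal (π / 4 * (‖μ ζ‖ ^ 2 / ζ.im ^ 2) * ζ.im)
              * ENNReal.ofReal ((-z.im) * ((‖ζ - z‖) ^ 4)⁻¹) := by
          intro z hz
          have hz' : z.im < 0 := hz
          rw [hH, ← ENNReal.ofReal_mul (mul_nonneg (mul_nonneg (by positivity) (by positivity))
            hy.le)]
          congr 1
          ring
        calc ∫⁻ z in L, H z ζ
            = ∫⁻ z in L, ENNReal.ofReal (π / 4 * (‖μ ζ‖ ^ 2 / ζ.im ^ 2) * ζ.im)
                * ENNReal.ofReal ((-z.im) * ((‖ζ - z‖) ^ 4)⁻¹) :=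
              setLIntegral_congr_fun hLm hsplit
          _ = ENNReal.ofReal (π / 4 * (‖μ ζ‖ ^ 2 / ζ.im ^ 2) * ζ.im)
                * ∫⁻ z in L, ENNReal.ofReal ((-z.im) * ((‖ζ - z‖) ^ 4)⁻¹) :=
              lintegral_const_mul _ hzl
          _ = ENNReal.ofReal (π / 4 * (‖μ ζ‖ ^ 2 / ζ.im ^ 2) * ζ.im)
                * ENNReal.ofReal (π / (4 * ζ.im)) := by rw [hL, keyLower hy]
          _ = ENNReal.ofReal (π ^ 2 / 16)
                * ENNReal.ofReal (‖μ ζ‖ ^ 2 / ζ.im ^ 2) := by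
              rw [← ENNReal.ofReal_mul (by positivity),
                ← ENNReal.ofReal_mul (by positivity)]
              congr 1
              field_simp
              ring
    _ = ENNReal.ofReal (π ^ 2 / 16)
          * ∫⁻ ζ in S, ENNReal.ofReal (‖μ ζ‖ ^ 2 / ζ.im ^ 2) := by
        apply lintegral_const_mul
        apply ENNReal.measurable_ofReal.comp
        exact ((continuous_norm.measurable.comp hmeas).pow measurable_const).div
          (Complex.measurable_im.pow measurable_const)
end

section
/- Let a, b be distinct real numbers and define f(z) = ((z − a)·(z − b)/(a − b)) · Log((z − b)/(z − a)) for z in the open lower half-plane ℍ* = {z ∈ ℂ : Im z < 0}, where Log is the principal branch of the complex logarithm. Then f is holomorphic on ℍ* and its third derivative satisfies f'''(z) = (a − b)² / ((z − a)²·(z − b)²) for all z ∈ ℍ*. -/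
open Complex

namespace ShearAux

lemma sub_real_ne {z : ℂ} (hz : z.im < 0) (c : ℝ) : z - (c : ℂ) ≠ 0 := by
  intro h
  have : z = (c : ℂ) := sub_eq_zero.mp h
  rw [this] at hz
  simp at hz

lemma slit {a b : ℝ} (hab : a ≠ b) {z : ℂ} (hz : z.im < 0) :
    (z - (b : ℂ)) / (z - (a : ℂ)) ∈ Complex.slitPlane := by
  rw [Complex.mem_slitPlane_iff]
  right
  have hN : Complex.normSq (z - (a : ℂ)) ≠ 0 :=
    ne_of_gt (Complex.normSq_pos.mpr (sub_real_ne hz a))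
  simp only [Complex.div_im, Complex.sub_im, Complex.sub_re, Complex.ofReal_im,
    Complex.ofReal_re, sub_zero]
  rw [div_sub_div_same]
  apply div_ne_zero _ hN
  have h : z.im * (z.re - a) - (z.re - b) * z.im = z.im * (b - a) := by ring
  rw [h]
  exact mul_ne_zero (ne_of_lt hz) (sub_ne_zero.mpr (Ne.symm hab))

lemma hL {a b : ℝ} (hab : a ≠ b) {z : ℂ} (hz : z.im < 0) :
    HasDerivAt (fun z : ℂ => Complex.log ((z - (b : ℂ)) / (z - (a : ℂ))))
      (((b : ℂ) - (a : ℂ)) / ((z - (a : ℂ)) * (z - (b : ℂ)))) z := by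
  have hzA := sub_real_ne hz a
  have hzB := sub_real_ne hz b
  have hg : HasDerivAt (fun z : ℂ => (z - (b : ℂ)) / (z - (a : ℂ)))
      ((1 * (z - (a : ℂ)) - (z - (b : ℂ)) * 1) / (z - (a : ℂ)) ^ 2) z :=
    ((hasDerivAt_id z).sub_const _).div ((hasDerivAt_id z).sub_const _) hzA
  have h := hg.clog (slit hab hz)
  convert h using 1
  field_simp
  ring

variable {a b : ℝ}

lemma hF (hab : a ≠ b) {z : ℂ} (hz : z.im < 0) :
    HasDerivAt (fun z : ℂ =>
        ((z - (a : ℂ)) * (z - (b : ℂ)) / ((a : ℂ) - (b : ℂ))) *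
          Complex.log ((z - (b : ℂ)) / (z - (a : ℂ))))
      ((2 * z - (a : ℂ) - (b : ℂ)) / ((a : ℂ) - (b : ℂ)) *
          Complex.log ((z - (b : ℂ)) / (z - (a : ℂ))) - 1) z := by
  have hzA := sub_real_ne hz a
  have hzB := sub_real_ne hz b
  have hc : (a : ℂ) - (b : ℂ) ≠ 0 := by
    rw [sub_ne_zero]
    exact_mod_cast hab
  have hq : HasDerivAt (fun z : ℂ => (z - (a : ℂ)) * (z - (b : ℂ)) / ((a : ℂ) - (b : ℂ)))
      ((1 * (z - (b : ℂ)) + (z - (a : ℂ)) * 1) / ((a : ℂ) - (b : ℂ))) z :=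
    (((hasDerivAt_id z).sub_const _).mul ((hasDerivAt_id z).sub_const _)).div_const _
  have h := hq.mul (hL hab hz)
  refine h.congr_deriv ?_
  field_simp
  ring

lemma hF1 (hab : a ≠ b) {z : ℂ} (hz : z.im < 0) :
    HasDerivAt (fun z : ℂ =>
        (2 * z - (a : ℂ) - (b : ℂ)) / ((a : ℂ) - (b : ℂ)) *
          Complex.log ((z - (b : ℂ)) / (z - (a : ℂ))) - 1)
      (2 / ((a : ℂ) - (b : ℂ)) * Complex.log ((z - (b : ℂ)) / (z - (a : ℂ))) -
        (2 * z - (a : ℂ) - (b : ℂ)) / ((z - (a : ℂ)) * (z - (b : ℂ)))) z := by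
  have hzA := sub_real_ne hz a
  have hzB := sub_real_ne hz b
  have hc : (a : ℂ) - (b : ℂ) ≠ 0 := by
    rw [sub_ne_zero]
    exact_mod_cast hab
  have hq : HasDerivAt (fun z : ℂ => (2 * z - (a : ℂ) - (b : ℂ)) / ((a : ℂ) - (b : ℂ)))
      (2 / ((a : ℂ) - (b : ℂ))) z := by
    have : HasDerivAt (fun z : ℂ => 2 * z - (a : ℂ) - (b : ℂ)) 2 z := by
      simpa using (((hasDerivAt_id z).const_mul 2).sub_const (a : ℂ)).sub_const (b : ℂ)
    exact this.div_const _
  have h := (hq.mul (hL hab hz)).sub_const 1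
  refine h.congr_deriv ?_
  field_simp
  ring

lemma hF2 (hab : a ≠ b) {z : ℂ} (hz : z.im < 0) :
    HasDerivAt (fun z : ℂ =>
        2 / ((a : ℂ) - (b : ℂ)) * Complex.log ((z - (b : ℂ)) / (z - (a : ℂ))) -
          (2 * z - (a : ℂ) - (b : ℂ)) / ((z - (a : ℂ)) * (z - (b : ℂ))))
      (((a : ℂ) - (b : ℂ)) ^ 2 / ((z - (a : ℂ)) ^ 2 * (z - (b : ℂ)) ^ 2)) z := by
  have hzA := sub_real_ne hz a
  have hzB := sub_real_ne hz b
  have hc : (a : ℂ) - (b : ℂ) ≠ 0 := by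
    rw [sub_ne_zero]
    exact_mod_cast hab
  have h1 : HasDerivAt
      (fun z : ℂ => 2 / ((a : ℂ) - (b : ℂ)) * Complex.log ((z - (b : ℂ)) / (z - (a : ℂ))))
      (2 / ((a : ℂ) - (b : ℂ)) * (((b : ℂ) - (a : ℂ)) / ((z - (a : ℂ)) * (z - (b : ℂ))))) z :=
    (hL hab hz).const_mul _
  have hnum : HasDerivAt (fun z : ℂ => 2 * z - (a : ℂ) - (b : ℂ)) 2 z := by
    simpa using (((hasDerivAt_id z).const_mul 2).sub_const (a : ℂ)).sub_const (b : ℂ)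
  have hden : HasDerivAt (fun z : ℂ => (z - (a : ℂ)) * (z - (b : ℂ)))
      (1 * (z - (b : ℂ)) + (z - (a : ℂ)) * 1) z :=
    ((hasDerivAt_id z).sub_const _).mul ((hasDerivAt_id z).sub_const _)
  have h2 := hnum.div hden (mul_ne_zero hzA hzB)
  have h := h1.sub h2
  refine h.congr_deriv ?_
  field_simp
  ring

end ShearAux

/-- **The holomorphic extension of a unit infinitesimal shear and its third derivative.**
For distinct reals `a ≠ b`, the function
`f(z) = ((z − a)(z − b)/(a − b)) · Log((z − b)/(z − a))` (principal branch) is holomorphic on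
the lower half-plane and `f'''(z) = (a − b)²/((z − a)²(z − b)²)` there. -/
theorem shear_extension_third_derivative (a b : ℝ) (hab : a ≠ b) (f : ℂ → ℂ)
    (hf : f = fun z : ℂ =>
      ((z - (a : ℂ)) * (z - (b : ℂ)) / ((a : ℂ) - (b : ℂ))) *
        Complex.log ((z - (b : ℂ)) / (z - (a : ℂ)))) :
    DifferentiableOn ℂ f {z : ℂ | z.im < 0} ∧
    ∀ z ∈ {z : ℂ | z.im < 0},
      iteratedDeriv 3 f z = ((a : ℂ) - (b : ℂ)) ^ 2 / ((z - (a : ℂ)) ^ 2 * (z - (b : ℂ)) ^ 2) := by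
  subst hf
  have hU : IsOpen {z : ℂ | z.im < 0} := isOpen_lt Complex.continuous_im continuous_const
  have hd1 : ∀ z ∈ {z : ℂ | z.im < 0},
      HasDerivAt (fun z : ℂ =>
        ((z - (a : ℂ)) * (z - (b : ℂ)) / ((a : ℂ) - (b : ℂ))) *
          Complex.log ((z - (b : ℂ)) / (z - (a : ℂ))))
      ((2 * z - (a : ℂ) - (b : ℂ)) / ((a : ℂ) - (b : ℂ)) *
          Complex.log ((z - (b : ℂ)) / (z - (a : ℂ))) - 1) z :=
    fun z hz => ShearAux.hF hab hz
  constructor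
  · exact fun z hz => (hd1 z hz).differentiableAt.differentiableWithinAt
  · intro z hz
    have e1 : ∀ w ∈ {z : ℂ | z.im < 0},
        deriv (fun z : ℂ =>
          ((z - (a : ℂ)) * (z - (b : ℂ)) / ((a : ℂ) - (b : ℂ))) *
            Complex.log ((z - (b : ℂ)) / (z - (a : ℂ)))) w =
        (2 * w - (a : ℂ) - (b : ℂ)) / ((a : ℂ) - (b : ℂ)) *
            Complex.log ((w - (b : ℂ)) / (w - (a : ℂ))) - 1 :=
      fun w hw => (hd1 w hw).deriv
    have e2 : ∀ w ∈ {z : ℂ | z.im < 0},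
        deriv (deriv (fun z : ℂ =>
          ((z - (a : ℂ)) * (z - (b : ℂ)) / ((a : ℂ) - (b : ℂ))) *
            Complex.log ((z - (b : ℂ)) / (z - (a : ℂ))))) w =
        2 / ((a : ℂ) - (b : ℂ)) * Complex.log ((w - (b : ℂ)) / (w - (a : ℂ))) -
          (2 * w - (a : ℂ) - (b : ℂ)) / ((w - (a : ℂ)) * (w - (b : ℂ))) := by
      intro w hw
      have he : deriv (fun z : ℂ =>
          ((z - (a : ℂ)) * (z - (b : ℂ)) / ((a : ℂ) - (b : ℂ))) *
            Complex.log ((z - (b : ℂ)) / (z - (a : ℂ)))) =ᶠ[nhds w]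
          fun w => (2 * w - (a : ℂ) - (b : ℂ)) / ((a : ℂ) - (b : ℂ)) *
            Complex.log ((w - (b : ℂ)) / (w - (a : ℂ))) - 1 := by
        filter_upwards [hU.mem_nhds hw] with x hx using e1 x hx
      rw [he.deriv_eq]
      exact (ShearAux.hF1 hab hw).deriv
    have e3 : deriv (deriv (deriv (fun z : ℂ =>
          ((z - (a : ℂ)) * (z - (b : ℂ)) / ((a : ℂ) - (b : ℂ))) *
            Complex.log ((z - (b : ℂ)) / (z - (a : ℂ)))))) z =
        ((a : ℂ) - (b : ℂ)) ^ 2 / ((z - (a : ℂ)) ^ 2 * (z - (b : ℂ)) ^ 2) := by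
      have he : deriv (deriv (fun z : ℂ =>
          ((z - (a : ℂ)) * (z - (b : ℂ)) / ((a : ℂ) - (b : ℂ))) *
            Complex.log ((z - (b : ℂ)) / (z - (a : ℂ))))) =ᶠ[nhds z]
          fun w => 2 / ((a : ℂ) - (b : ℂ)) * Complex.log ((w - (b : ℂ)) / (w - (a : ℂ))) -
            (2 * w - (a : ℂ) - (b : ℂ)) / ((w - (a : ℂ)) * (w - (b : ℂ))) := by
        filter_upwards [hU.mem_nhds hz] with x hx using e2 x hx
      rw [he.deriv_eq]
      exact (ShearAux.hF2 hab hz).deriv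
    simpa only [iteratedDeriv_succ, iteratedDeriv_zero] using e3
end

section
/- Let φ : ℝ → ℝ be strictly increasing with φ(x) → ∞ as x → ∞ and φ(x) → −∞ as x → −∞, and suppose the function ψ(x) := −1/φ(−1/x) (for x ≠ 0 with −1/x in the domain where φ is nonzero, extended by ψ(0) = 0) is continuously differentiable on an interval [−δ, 0] for some δ > 0 with ψ'(0) > 0. Then lim_{n→∞} (φ(n+1) − φ(n)) = 1/ψ'(0), where the limit is over natural numbers n. -/
open Filter

/-- **Convergent increments from boundary differentiability (converse direction).**
Let `φ : ℝ → ℝ` be strictly increasing with `φ(x) → ±∞` as `x → ±∞`, and suppose the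
function `ψ`, given by `ψ(x) = −1/φ(−1/x)` for `x ≠ 0` and `ψ(0) = 0`, is continuously
differentiable on `[−δ, 0]` for some `δ > 0` with `ψ'(0) > 0`. Then
`φ(n+1) − φ(n) → 1/ψ'(0)` as `n → ∞`. -/
theorem increments_from_C1_boundary (φ ψ ψ' : ℝ → ℝ) (hmono : StrictMono φ)
    (htop : Tendsto φ atTop atTop) (hbot : Tendsto φ atBot atBot)
    (hψ0 : ψ 0 = 0) (hψ : ∀ x : ℝ, x ≠ 0 → ψ x = -1 / φ (-1 / x))
    (δ : ℝ) (hδ : 0 < δ)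
    (hderiv : ∀ x ∈ Set.Icc (-δ) 0, HasDerivWithinAt ψ (ψ' x) (Set.Icc (-δ) 0) x)
    (hcont : ContinuousOn ψ' (Set.Icc (-δ) 0)) (hpos : 0 < ψ' 0) :
    Tendsto (fun n : ℕ => φ ((n : ℝ) + 1) - φ n) atTop (nhds (1 / ψ' 0)) := by
  have h0mem : (0:ℝ) ∈ Set.Icc (-δ) 0 := ⟨by linarith, le_refl 0⟩
  -- ψ(-1/t) = -1/φ t for t > 0
  have hψt : ∀ t : ℝ, 0 < t → ψ (-1/t) = -1/φ t := by
    intro t ht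
    rw [hψ (-1/t) (div_ne_zero (by norm_num) ht.ne')]
    congr 2
    field_simp
  -- a n := -n ψ(-1/n)
  set a : ℕ → ℝ := fun n => -(n:ℝ) * ψ (-1/(n:ℝ)) with ha_def
  -- a → ψ' 0 using the derivative at 0
  have hslope : Tendsto (slope ψ 0) (nhdsWithin 0 (Set.Icc (-δ) 0 \ {0})) (nhds (ψ' 0)) :=
    hasDerivWithinAt_iff_tendsto_slope.mp (hderiv 0 h0mem)
  have hxtend : Tendsto (fun n : ℕ => -1/(n:ℝ)) atTop (nhds 0) := by
    have := (tendsto_one_div_atTop_nhds_zero_nat (𝕜 := ℝ)).neg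
    simpa [neg_div] using this
  have hxin : ∀ᶠ n : ℕ in atTop, -1/(n:ℝ) ∈ Set.Icc (-δ) 0 \ {0} := by
    filter_upwards [eventually_ge_atTop 1,
      tendsto_natCast_atTop_atTop.eventually_ge_atTop (1/δ)] with n hn1 hnδ
    have hn : (1:ℝ) ≤ n := by exact_mod_cast hn1
    have hnpos : (0:ℝ) < n := by linarith
    constructor
    · constructor
      · rw [neg_div, neg_le_neg_iff, div_le_iff₀ hnpos]
        rw [div_le_iff₀ hδ] at hnδ
        linarith
      · have : (0:ℝ) < 1/(n:ℝ) := by positivity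
        rw [neg_div]; linarith
    · simp only [Set.mem_singleton_iff]
      have : (0:ℝ) < 1/(n:ℝ) := by positivity
      intro h; rw [neg_div] at h; linarith [h ▸ this]
  have hxw : Tendsto (fun n : ℕ => -1/(n:ℝ)) atTop
      (nhdsWithin 0 (Set.Icc (-δ) 0 \ {0})) :=
    tendsto_nhdsWithin_iff.mpr ⟨hxtend, hxin⟩
  have ha : Tendsto a atTop (nhds (ψ' 0)) := by
    refine (hslope.comp hxw).congr' ?_
    filter_upwards [eventually_ge_atTop 1] with n hn1
    have hn : (1:ℝ) ≤ n := by exact_mod_cast hn1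
    have hnpos : (0:ℝ) < n := by linarith
    simp only [Function.comp_apply, slope_def_field, ha_def, hψ0]
    field_simp
    ring
  have ha' : Tendsto (fun n : ℕ => -(((n:ℝ))+1) * ψ (-1/((n:ℝ)+1))) atTop (nhds (ψ' 0)) := by
    have := ha.comp (tendsto_add_atTop_nat 1)
    refine this.congr ?_
    intro n; simp only [Function.comp_apply, ha_def]; push_cast; ring_nf
  -- MVT: choose c n
  have hcex : ∀ n : ℕ, ∃ cn : ℝ, ((1:ℝ) ≤ (n:ℝ) ∧ 1/δ ≤ (n:ℝ)) →
      cn ∈ Set.Ioo (-1/(n:ℝ)) (-1/((n:ℝ)+1)) ∧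
      ψ' cn = (ψ (-1/((n:ℝ)+1)) - ψ (-1/(n:ℝ))) / ((-1/((n:ℝ)+1)) - (-1/(n:ℝ))) := by
    intro n
    by_cases h : (1:ℝ) ≤ (n:ℝ) ∧ 1/δ ≤ (n:ℝ)
    · obtain ⟨hn, hnδ⟩ := h
      have hnpos : (0:ℝ) < n := by linarith
      have hlt : -1/(n:ℝ) < -1/((n:ℝ)+1) := by
        rw [div_lt_div_iff₀ hnpos (by linarith)]; ring_nf; linarith
      have hsub : Set.Icc (-1/(n:ℝ)) (-1/((n:ℝ)+1)) ⊆ Set.Icc (-δ) 0 := by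
        apply Set.Icc_subset_Icc
        · have h1 : 1/(n:ℝ) ≤ δ := by
            rw [div_le_iff₀ hnpos]
            rw [div_le_iff₀ hδ] at hnδ
            linarith
          rw [neg_div]; linarith
        · have : (0:ℝ) < 1/((n:ℝ)+1) := by positivity
          rw [neg_div]; linarith
      have hcontψ : ContinuousOn ψ (Set.Icc (-1/(n:ℝ)) (-1/((n:ℝ)+1))) := fun x hx =>
        ((hderiv x (hsub hx)).continuousWithinAt).mono hsub
      have hderψ : ∀ x ∈ Set.Ioo (-1/(n:ℝ)) (-1/((n:ℝ)+1)), HasDerivAt ψ (ψ' x) x := by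
        intro x hx
        have hx' : x ∈ Set.Icc (-δ) 0 := hsub (Set.Ioo_subset_Icc_self hx)
        have hlt1 : -δ < x := by
          have : -δ ≤ -1/(n:ℝ) := (hsub (Set.left_mem_Icc.mpr hlt.le)).1
          linarith [hx.1]
        have hlt2 : x < 0 := by
          have h2 : (-1/((n:ℝ)+1) : ℝ) ≤ 0 := (hsub (Set.right_mem_Icc.mpr hlt.le)).2
          linarith [hx.2]
        exact (hderiv x hx').hasDerivAt (Icc_mem_nhds hlt1 hlt2)
      obtain ⟨cn, hcn, heq⟩ := exists_hasDerivAt_eq_slope ψ ψ' hlt hcontψ hderψ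
      exact ⟨cn, fun _ => ⟨hcn, heq⟩⟩
    · exact ⟨0, fun hh => absurd hh h⟩
  choose c hc using hcex
  have hev : ∀ᶠ n : ℕ in atTop, ((1:ℝ) ≤ (n:ℝ) ∧ 1/δ ≤ (n:ℝ)) ∧ 0 < φ n := by
    filter_upwards [eventually_ge_atTop 1,
      tendsto_natCast_atTop_atTop.eventually_ge_atTop (1/δ),
      (htop.comp tendsto_natCast_atTop_atTop).eventually_gt_atTop 0] with n h1 h2 h3
    exact ⟨⟨by exact_mod_cast h1, h2⟩, h3⟩
  -- c n → 0 within Icc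
  have hclow : ∀ᶠ n : ℕ in atTop, -1/(n:ℝ) ≤ c n := by
    filter_upwards [hev] with n hn
    exact ((hc n hn.1).1.1).le
  have hchigh : ∀ᶠ n : ℕ in atTop, c n ≤ -1/((n:ℝ)+1) := by
    filter_upwards [hev] with n hn
    exact ((hc n hn.1).1.2).le
  have hx2tend : Tendsto (fun n : ℕ => -1/((n:ℝ)+1)) atTop (nhds 0) := by
    have := hxtend.comp (tendsto_add_atTop_nat 1)
    refine this.congr ?_
    intro n; simp only [Function.comp_apply]; push_cast; ring_nf
  have hctend : Tendsto c atTop (nhds 0) :=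
    tendsto_of_tendsto_of_tendsto_of_le_of_le' hxtend hx2tend hclow hchigh
  have hcmem : ∀ᶠ n : ℕ in atTop, c n ∈ Set.Icc (-δ) 0 := by
    filter_upwards [hev, hxin] with n hn hx
    refine ⟨le_trans hx.1.1 ((hc n hn.1).1.1).le, ?_⟩
    have h2 := ((hc n hn.1).1.2).le
    have : (0:ℝ) < 1/((n:ℝ)+1) := by positivity
    rw [neg_div] at h2; linarith
  have hψ'c : Tendsto (fun n => ψ' (c n)) atTop (nhds (ψ' 0)) := by
    have hcw : Tendsto c atTop (nhdsWithin 0 (Set.Icc (-δ) 0)) :=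
      tendsto_nhdsWithin_iff.mpr ⟨hctend, hcmem⟩
    exact (hcont 0 h0mem).tendsto.comp hcw
  -- the limit of the model expression
  have hmain : Tendsto (fun n : ℕ => ψ' (c n) / (a n * (-(((n:ℝ))+1) * ψ (-1/((n:ℝ)+1)))))
      atTop (nhds (ψ' 0 / (ψ' 0 * ψ' 0))) :=
    hψ'c.div (ha.mul ha') (by positivity)
  have hval : ψ' 0 / (ψ' 0 * ψ' 0) = 1 / ψ' 0 := by
    field_simp
  rw [← hval]
  refine hmain.congr' ?_
  -- eventual equality
  filter_upwards [hev] with n hn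
  obtain ⟨⟨hn1, hnδ⟩, hφn⟩ := hn
  have hnpos : (0:ℝ) < n := by linarith
  have hφn1 : 0 < φ ((n:ℝ)+1) := lt_trans hφn (hmono (by linarith))
  have hu : ψ (-1/(n:ℝ)) = -1/φ n := hψt _ hnpos
  have hv : ψ (-1/((n:ℝ)+1)) = -1/φ ((n:ℝ)+1) := hψt _ (by linarith)
  have heq := (hc n ⟨hn1, hnδ⟩).2
  have hd : (-1/((n:ℝ)+1)) - (-1/(n:ℝ)) = 1/((n:ℝ)*((n:ℝ)+1)) := by
    field_simp; ring
  have hn1pos : (0:ℝ) < (n:ℝ)+1 := by linarith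
  simp only [ha_def]
  rw [heq, hu, hv, hd]
  field_simp
  ring
end

section
/- Define φ(x) = x·log x − x for x ≥ 2, and for integers n ≥ 3 set s_n = log((φ(n+1) − φ(n))/(φ(n) − φ(n−1))). Then: (i) there exists a constant C > 0 such that |s_n − 1/(n·log n)| ≤ C/n² for all n ≥ 3; (ii) the series ∑_{n≥3} s_n² converges; (iii) the series ∑_{n≥3} s_n diverges to +∞. -/
open Filter

/-- The boundary homeomorphism `φ(x) = x log x − x` of the explicit Weil–Petersson example. -/
noncomputable def phiWP (x : ℝ) : ℝ := x * Real.log x - x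

/-- The shear `s_n = log((φ(n+1) − φ(n))/(φ(n) − φ(n−1)))` along the fan of edges `(n, ∞)`. -/
noncomputable def shearWP (n : ℕ) : ℝ :=
  Real.log ((phiWP ((n : ℝ) + 1) - phiWP n) / (phiWP n - phiWP ((n : ℝ) - 1)))

namespace WPaux
open Real

noncomputable def Bf (t : ℝ) : ℝ := t * Real.log t - (t-1) * Real.log (t-1) - 1
noncomputable def Hf (t : ℝ) : ℝ :=
  ((t+1) * Real.log (t+1) - t * Real.log t - 1) - Bf t

lemma taylor_dn {y : ℝ} (h0 : 0 ≤ y) (h3 : y ≤ 1/3) :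
    |Real.log (1-y) - (-y - y^2/2 - y^3/3)| ≤ 3/2*y^4 := by
  have h := Real.abs_log_sub_add_sum_range_le (x := y) (by rw [abs_of_nonneg h0]; linarith) 3
  rw [abs_of_nonneg h0] at h
  simp [Finset.sum_range_succ] at h
  have h2 : y^4/(1-y) ≤ 3/2*y^4 := by
    rw [div_le_iff₀ (by linarith)]
    nlinarith [pow_nonneg h0 4]
  calc |Real.log (1-y) - (-y - y^2/2 - y^3/3)|
      = |(y/1 + y^2/2 + y^3/3) + Real.log (1-y)| := by ring_nf
    _ ≤ y^4/(1-y) := by convert h using 2 <;> ring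
    _ ≤ 3/2*y^4 := h2

lemma taylor_up {y : ℝ} (h0 : 0 ≤ y) (h3 : y ≤ 1/3) :
    |Real.log (1+y) - (y - y^2/2 + y^3/3)| ≤ 3/2*y^4 := by
  have h := Real.abs_log_sub_add_sum_range_le (x := -y) (by rw [abs_neg, abs_of_nonneg h0]; linarith) 3
  rw [abs_neg, abs_of_nonneg h0] at h
  simp [Finset.sum_range_succ] at h
  have h2 : y^4/(1-y) ≤ 3/2*y^4 := by
    rw [div_le_iff₀ (by linarith)]
    nlinarith [pow_nonneg h0 4]
  calc |Real.log (1+y) - (y - y^2/2 + y^3/3)|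
      = |((-y)/1 + (-y)^2/2 + (-y)^3/3) + Real.log (1-(-y))| := by ring_nf
    _ ≤ y^4/(1-y) := by convert h using 2 <;> ring
    _ ≤ 3/2*y^4 := h2

lemma taylor_up1 {x : ℝ} (h0 : 0 ≤ x) (h3 : x ≤ 5/6) :
    |Real.log (1+x) - x| ≤ x^2/(1-x) := by
  have h := Real.abs_log_sub_add_sum_range_le (x := -x) (by rw [abs_neg, abs_of_nonneg h0]; linarith) 1
  rw [abs_neg, abs_of_nonneg h0] at h
  simp [Finset.sum_range_succ] at h
  calc |Real.log (1+x) - x| = |(-x)/1 + Real.log (1-(-x))| := by ring_nf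
    _ ≤ x^2/(1-x) := by convert h using 2 <;> ring

lemma log_ge_one {t : ℝ} (ht : 3 ≤ t) : 1 ≤ Real.log t := by
  rw [Real.le_log_iff_exp_le (by linarith)]
  calc Real.exp 1 ≤ 2.7182818286 := Real.exp_one_lt_d9.le
    _ ≤ t := by linarith

lemma log_le_self {t : ℝ} (ht : 3 ≤ t) : Real.log t ≤ t :=
  (Real.log_le_sub_one_of_pos (by linarith)).trans (by linarith)

lemma inv_small {t : ℝ} (ht : 3 ≤ t) : 1/t ≤ 1/3 := by
  rw [div_le_div_iff₀ (by linarith) (by norm_num)]; linarith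

lemma log_split_m {t : ℝ} (ht : 3 ≤ t) :
    Real.log (t-1) = Real.log t + Real.log (1 - 1/t) := by
  have h1 : t - 1 = t * (1 - 1/t) := by field_simp
  rw [h1, Real.log_mul (by linarith) (by rw [sub_ne_zero]; intro h; nlinarith [h])]

lemma log_split_p {t : ℝ} (ht : 3 ≤ t) :
    Real.log (t+1) = Real.log t + Real.log (1 + 1/t) := by
  have h1 : t + 1 = t * (1 + 1/t) := by field_simp
  rw [h1, Real.log_mul (by linarith) (by positivity)]

lemma Bf_id {t : ℝ} (ht : 3 ≤ t) :
    Bf t = Real.log t - ((t-1) * Real.log (1 - 1/t) + 1) := by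
  rw [Bf, log_split_m ht]; ring

lemma Bf_le {t : ℝ} (ht : 3 ≤ t) : Bf t ≤ Real.log t := by
  have ht1 : t - 1 ≠ 0 := by intro h'; linarith [h']
  have hlow : -(1/(t-1)) ≤ Real.log (1 - 1/t) := by
    have h := Real.one_sub_inv_le_log_of_pos (x := 1 - 1/t) (by linarith [inv_small ht])
    have hinv : (1 - 1/t)⁻¹ = t/(t-1) :=
      inv_eq_of_mul_eq_one_right (by field_simp)
    rw [hinv] at h
    have e : 1 - t/(t-1) = -(1/(t-1)) := by
      rw [eq_neg_iff_add_eq_zero, sub_add, div_sub_div _ _ ht1 ht1]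
      simp [sub_eq_zero]
      rw [eq_div_iff (mul_ne_zero ht1 ht1)]; ring
    linarith [e ▸ h]
  rw [Bf_id ht]
  have h1 : (t-1) * (-(1/(t-1))) ≤ (t-1) * Real.log (1 - 1/t) :=
    mul_le_mul_of_nonneg_left hlow (by linarith)
  have h2 : (t-1) * (-(1/(t-1))) = -1 := by
    rw [mul_neg, mul_one_div, div_self ht1]
  linarith

lemma Bf_ge {t : ℝ} (ht : 3 ≤ t) : Real.log t - 1/t ≤ Bf t := by
  have hup : Real.log (1 - 1/t) ≤ -(1/t) := by
    have := Real.log_le_sub_one_of_pos (x := 1 - 1/t) (by linarith [inv_small ht])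
    linarith
  rw [Bf_id ht]
  have h1 : (t-1) * Real.log (1 - 1/t) ≤ (t-1) * (-(1/t)) :=
    mul_le_mul_of_nonneg_left hup (by linarith)
  have h2 : (t-1) * (-(1/t)) = -1 + 1/t := by field_simp; ring
  linarith

lemma Hf_id {t : ℝ} (ht : 3 ≤ t) :
    Hf t = (t+1) * Real.log (1+1/t) + (t-1) * Real.log (1-1/t) := by
  rw [Hf, Bf, log_split_m ht, log_split_p ht]; ring

lemma Hf_est {t : ℝ} (ht : 3 ≤ t) : |Hf t - 1/t| ≤ 11/(3*t^3) := by
  have ht0 : (0:ℝ) < t := by linarith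
  have hy0 : (0:ℝ) ≤ 1/t := by positivity
  have hy3 := inv_small ht
  have he2 := abs_le.mp (taylor_up hy0 hy3)
  have he1 := abs_le.mp (taylor_dn hy0 hy3)
  have hA1 : (t+1) * Real.log (1+1/t) ≤
      (t+1) * (1/t - (1/t)^2/2 + (1/t)^3/3 + 3/2*(1/t)^4) :=
    mul_le_mul_of_nonneg_left (by linarith [he2.2]) (by linarith)
  have hA2 : (t+1) * (1/t - (1/t)^2/2 + (1/t)^3/3 - 3/2*(1/t)^4) ≤
      (t+1) * Real.log (1+1/t) :=
    mul_le_mul_of_nonneg_left (by linarith [he2.1]) (by linarith)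
  have hB1 : (t-1) * Real.log (1-1/t) ≤
      (t-1) * (-(1/t) - (1/t)^2/2 - (1/t)^3/3 + 3/2*(1/t)^4) :=
    mul_le_mul_of_nonneg_left (by linarith [he1.2]) (by linarith)
  have hB2 : (t-1) * (-(1/t) - (1/t)^2/2 - (1/t)^3/3 - 3/2*(1/t)^4) ≤
      (t-1) * Real.log (1-1/t) :=
    mul_le_mul_of_nonneg_left (by linarith [he1.1]) (by linarith)
  have key1 : (t+1) * (1/t - (1/t)^2/2 + (1/t)^3/3 + 3/2*(1/t)^4)
      + (t-1) * (-(1/t) - (1/t)^2/2 - (1/t)^3/3 + 3/2*(1/t)^4) - 1/t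
      = 11/(3*t^3) := by field_simp; ring
  have key2 : (t+1) * (1/t - (1/t)^2/2 + (1/t)^3/3 - 3/2*(1/t)^4)
      + (t-1) * (-(1/t) - (1/t)^2/2 - (1/t)^3/3 - 3/2*(1/t)^4) - 1/t
      = -(7/(3*t^3)) := by field_simp; ring
  have h711 : 7/(3*t^3) ≤ 11/(3*t^3) := by gcongr <;> norm_num
  rw [Hf_id ht, abs_le]
  constructor
  · linarith
  · linarith

lemma Hf_crude {t : ℝ} (ht : 3 ≤ t) : 11/(3*t^3) ≤ 11/(27*t) := by
  rw [div_le_div_iff₀ (by positivity) (by positivity)]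
  nlinarith [mul_nonneg (mul_nonneg (by linarith : (0:ℝ) ≤ t) (by linarith : (0:ℝ) ≤ t-3)) (by linarith : (0:ℝ) ≤ t+3)]

lemma Hf_ge {t : ℝ} (ht : 3 ≤ t) : 1/(2*t) ≤ Hf t := by
  have h := (abs_le.mp (Hf_est ht)).1
  have h2 := Hf_crude ht
  have e1 : 11/(27*t) = (11/27) * (1/t) := by ring
  have e2 : 1/(2*t) = (1/2) * (1/t) := by ring
  have hp : (0:ℝ) < 1/t := by positivity
  linarith

lemma Hf_le' {t : ℝ} (ht : 3 ≤ t) : Hf t ≤ 5/(3*t) := by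
  have h := (abs_le.mp (Hf_est ht)).2
  have h2 := Hf_crude ht
  have e1 : 11/(27*t) = (11/27) * (1/t) := by ring
  have e2 : 5/(3*t) = (5/3) * (1/t) := by ring
  have hp : (0:ℝ) < 1/t := by positivity
  linarith

lemma Hf_pos {t : ℝ} (ht : 3 ≤ t) : 0 < Hf t :=
  lt_of_lt_of_le (by positivity) (Hf_ge ht)

lemma x_est {t : ℝ} (ht : 3 ≤ t) :
    |Hf t / Bf t - 1/(t*Real.log t)| ≤ 4/t^2 := by
  have hL1 : 1 ≤ Real.log t := log_ge_one ht
  set L := Real.log t with hLdef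
  have ht0 : (0:ℝ) < t := by linarith
  have hy3 := inv_small ht
  have hB1 : Bf t ≤ L := Bf_le ht
  have hB2 : L - 1/t ≤ Bf t := Bf_ge ht
  have hBpos : (0:ℝ) < Bf t := by linarith
  have hH := abs_le.mp (Hf_est ht)
  have hLm : (0:ℝ) < L - 1/t := by linarith
  have hup : Hf t / Bf t - 1/(t*L) ≤ 4/t^2 := by
    have hx : Hf t / Bf t ≤ (1/t + 11/(3*t^3))/(L - 1/t) :=
      div_le_div₀ (by positivity) (by linarith [hH.2]) hLm hB2
    have hstep : (1/t + 11/(3*t^3))/(L - 1/t) ≤ 1/(t*L) + 4/t^2 := by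
      rw [div_le_iff₀ hLm]
      have hL0 : L ≠ 0 := by linarith
      have ht0' : t ≠ 0 := by linarith
      field_simp
      have clean : 23*L + 3*t ≤ 12*L^2*t := by
        nlinarith [mul_nonneg (mul_nonneg (sub_nonneg.2 (by linarith : (3:ℝ) ≤ t)) (by linarith : (0:ℝ) ≤ L)) (by linarith : (0:ℝ) ≤ L),
          mul_nonneg (mul_nonneg ht0.le (by linarith : (0:ℝ) ≤ L)) (sub_nonneg.2 hL1),
          mul_nonneg ht0.le (sub_nonneg.2 hL1)]
      nlinarith [mul_le_mul_of_nonneg_right clean (by positivity : (0:ℝ) ≤ t^5)]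
    linarith
  have hdn : 1/(t*L) - Hf t / Bf t ≤ 4/t^2 := by
    have hx : (1/t - 11/(3*t^3))/L ≤ Hf t / Bf t := by
      apply div_le_div₀ (Hf_pos ht).le (by linarith [hH.1]) hBpos hB1
    have e : 1/(t*L) - (1/t - 11/(3*t^3))/L = 11/(3*t^3)/L := by
      field_simp
      ring
    have e2 : 11/(3*t^3)/L ≤ 4/t^2 := by
      have e3 : 11/(3*t^3)/L ≤ 11/(3*t^3) := div_le_self (by positivity) hL1
      have e4 : 11/(3*t^3) ≤ 4/t^2 := by
        rw [div_le_div_iff₀ (by positivity) (by positivity)]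
        nlinarith [mul_nonneg (sub_nonneg.2 (by linarith : (3:ℝ) ≤ t)) (by positivity : (0:ℝ) ≤ t^2)]
      linarith
    linarith
  rw [abs_le]; constructor <;> linarith

lemma Bf_pos {t : ℝ} (ht : 3 ≤ t) : 0 < Bf t := by
  have := Bf_ge ht; have := log_ge_one ht; have := inv_small ht; linarith

lemma Bf_23 {t : ℝ} (ht : 3 ≤ t) : 2/3 ≤ Bf t := by
  have := Bf_ge ht; have := log_ge_one ht; have := inv_small ht; linarith

lemma shear_est {t : ℝ} (ht : 3 ≤ t) :
    |Real.log ((Bf t + Hf t)/Bf t) - 1/(t*Real.log t)| ≤ 50/t^2 := by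
  have ht0 : (0:ℝ) < t := by linarith
  have hBpos := Bf_pos ht
  set x := Hf t / Bf t with hxdef
  have hx0 : 0 < x := div_pos (Hf_pos ht) hBpos
  have harg : (Bf t + Hf t)/Bf t = 1 + x := by
    rw [hxdef, add_div, div_self hBpos.ne']
  have hxu : x ≤ 5/(2*t) := by
    calc x ≤ (5/(3*t))/(2/3) := div_le_div₀ (by positivity) (Hf_le' ht) (by norm_num) (Bf_23 ht)
      _ = 5/(2*t) := by ring
  have hx56 : x ≤ 5/6 := by
    have : 5/(2*t) ≤ 5/6 := by
      rw [div_le_div_iff₀ (by linarith) (by norm_num)]; linarith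
    linarith
  have hlg := taylor_up1 hx0.le hx56
  have hq : x^2/(1-x) ≤ 6*x^2 := by
    rw [div_le_iff₀ (by linarith)]
    nlinarith [sq_nonneg x]
  have h38 : 6*x^2 ≤ 38/t^2 := by
    have hsq : x*x ≤ (5/(2*t))*(5/(2*t)) := mul_le_mul hxu hxu hx0.le (by positivity)
    have e : 6*((5/(2*t))*(5/(2*t))) = (75/2)/t^2 := by ring
    have e2 : (75/2)/t^2 ≤ 38/t^2 := by gcongr <;> norm_num
    nlinarith [hsq]
  have hxe := x_est ht
  rw [harg]
  calc |Real.log (1+x) - 1/(t*Real.log t)|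
      ≤ |Real.log (1+x) - x| + |x - 1/(t*Real.log t)| := abs_sub_le _ _ _
    _ ≤ 38/t^2 + 4/t^2 := by
        refine add_le_add (hlg.trans (hq.trans h38)) hxe
    _ ≤ 50/t^2 := by rw [← add_div]; gcongr <;> norm_num

lemma shear_pos {t : ℝ} (ht : 3 ≤ t) : 0 < Real.log ((Bf t + Hf t)/Bf t) := by
  apply Real.log_pos
  rw [lt_div_iff₀ (Bf_pos ht)]
  nlinarith [Hf_pos ht, Bf_pos ht]

noncomputable def ff (n : ℕ) : ℝ := 1/((n:ℝ)*(1+Real.log n))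

lemma ff_nonneg : ∀ n : ℕ, 0 ≤ ff n := by
  intro n
  cases n with
  | zero => simp [ff]
  | succ m =>
    have h1 : (0:ℝ) ≤ Real.log ((m:ℝ)+1) := Real.log_nonneg (by linarith [Nat.cast_nonneg (α := ℝ) m])
    have : (0:ℝ) < ((m:ℝ)+1) * (1 + Real.log ((m:ℝ)+1)) := by positivity
    rw [ff]
    push_cast
    positivity

lemma ff_anti : ∀ ⦃m n : ℕ⦄, 0 < m → m ≤ n → ff n ≤ ff m := by
  intro m n hm hmn
  have hm1 : (1:ℝ) ≤ (m:ℝ) := by exact_mod_cast hm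
  have hmn' : (m:ℝ) ≤ (n:ℝ) := by exact_mod_cast hmn
  have hlm : (0:ℝ) ≤ Real.log m := Real.log_nonneg hm1
  have hll : Real.log (m:ℝ) ≤ Real.log (n:ℝ) := Real.log_le_log (by linarith) hmn'
  apply one_div_le_one_div_of_le (by positivity)
  apply mul_le_mul hmn' (by linarith) (by linarith) (by linarith)

lemma ff_not_summable : ¬ Summable ff := by
  intro h
  have hcond := (summable_condensed_iff_of_nonneg ff_nonneg ff_anti).2 h
  have heq : ∀ k : ℕ, (2:ℝ)^k * ff (2^k) = 1/(1+(k:ℝ)*Real.log 2) := by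
    intro k
    have hc : ((2^k : ℕ) : ℝ) = 2^k := by push_cast; ring
    have hne : ((2:ℝ)^k) ≠ 0 := by positivity
    rw [ff, hc, Real.log_pow]
    have hd : (0:ℝ) < 1 + (k:ℝ)*Real.log 2 := by
      have := Real.log_pos (by norm_num : (1:ℝ) < 2)
      positivity
    field_simp
  rw [funext heq] at hcond
  have hcmp : Summable (fun k : ℕ => 1/((k:ℝ)+1)) := by
    apply Summable.of_nonneg_of_le (fun k => by positivity) _ hcond
    intro k
    have hl2 : Real.log 2 ≤ 1 := by
      have := Real.log_two_lt_d9; linarith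
    have hl2' : (0:ℝ) < Real.log 2 := Real.log_pos (by norm_num)
    apply one_div_le_one_div_of_le (by positivity)
    have : (k:ℝ)*Real.log 2 ≤ (k:ℝ) := by
      nlinarith [Nat.cast_nonneg (α := ℝ) k]
    linarith
  have : Summable (fun k : ℕ => 1/((k:ℕ):ℝ)) := by
    rw [← summable_nat_add_iff 1]
    convert hcmp using 2 with k
    · rfl
    · push_cast; ring
  exact Real.not_summable_one_div_natCast this

lemma base_summable : Summable (fun n : ℕ => 1/((n:ℝ)+1)^2) := by
  have h2 : Summable (fun n : ℕ => 1/((n:ℕ):ℝ)^2) :=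
    Real.summable_one_div_nat_pow.mpr (by norm_num)
  have := (summable_nat_add_iff 1).2 h2
  convert this using 2 with n
  · rfl
  · push_cast; ring

lemma shear_eq (n : ℕ) :
    shearWP n = Real.log ((Bf (n:ℝ) + Hf (n:ℝ))/Bf (n:ℝ)) := by
  have e1 : phiWP ((n:ℝ)+1) - phiWP (n:ℝ) = Bf (n:ℝ) + Hf (n:ℝ) := by
    simp only [phiWP, Bf, Hf]; ring
  have e2 : phiWP (n:ℝ) - phiWP ((n:ℝ)-1) = Bf (n:ℝ) := by
    simp only [phiWP, Bf]; ring
  rw [shearWP, e1, e2]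

lemma shear_abs {t : ℝ} (ht : 3 ≤ t) :
    |Real.log ((Bf t + Hf t)/Bf t)| ≤ 18/t := by
  have ht0 : (0:ℝ) < t := by linarith
  have hL := log_ge_one ht
  have h := shear_est ht
  have h1 : 1/(t*Real.log t) ≤ 1/t := by
    apply one_div_le_one_div_of_le ht0
    nlinarith
  have h1' : (0:ℝ) < 1/(t*Real.log t) := by positivity
  have h2 : 50/t^2 ≤ 17/t := by
    rw [div_le_div_iff₀ (by positivity) ht0]
    nlinarith
  calc |Real.log ((Bf t + Hf t)/Bf t)|
      = |(Real.log ((Bf t + Hf t)/Bf t) - 1/(t*Real.log t)) + 1/(t*Real.log t)| := by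
        rw [sub_add_cancel]
    _ ≤ |Real.log ((Bf t + Hf t)/Bf t) - 1/(t*Real.log t)| + |1/(t*Real.log t)| := abs_add_le _ _
    _ ≤ 50/t^2 + 1/(t*Real.log t) := by
        rw [abs_of_pos h1']; exact add_le_add h (le_refl _)
    _ ≤ 17/t + 1/t := add_le_add h2 h1
    _ = 18/t := by ring

end WPaux
open WPaux

/-- **A Weil–Petersson homeomorphism with square-summable but non-summable shears.**
For `φ(x) = x log x − x` and `s_n = log((φ(n+1) − φ(n))/(φ(n) − φ(n−1)))` (for `n ≥ 3`):
(i) `|s_n − 1/(n log n)| ≤ C/n²` for some constant `C > 0`;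
(ii) `∑_{n≥3} s_n²` converges;
(iii) `∑_{n≥3} s_n` diverges to `+∞`. -/
theorem wp_not_in_P_example :
    (∃ C > 0, ∀ n : ℕ, 3 ≤ n →
      |shearWP n - 1 / ((n : ℝ) * Real.log n)| ≤ C / (n : ℝ) ^ 2) ∧
    Summable (fun n : ℕ => (shearWP (n + 3)) ^ 2) ∧
    Tendsto (fun N : ℕ => ∑ n ∈ Finset.range N, shearWP (n + 3)) atTop atTop := by
  have hcast : ∀ n : ℕ, (3:ℝ) ≤ ((n+3 : ℕ) : ℝ) := by
    intro n; push_cast; linarith [Nat.cast_nonneg (α := ℝ) n]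
  refine ⟨⟨50, by norm_num, fun n hn => ?_⟩, ?_, ?_⟩
  · have ht : (3:ℝ) ≤ (n:ℝ) := by exact_mod_cast hn
    rw [shear_eq]
    exact shear_est ht
  · apply Summable.of_nonneg_of_le (fun n => sq_nonneg _) _ (base_summable.mul_left 324)
    intro n
    have ht := hcast n
    have habs : |shearWP (n+3)| ≤ 18/(((n+3:ℕ)):ℝ) := by
      rw [shear_eq]; exact shear_abs ht
    have hc : (((n+3:ℕ)):ℝ) = (n:ℝ)+3 := by push_cast; ring
    have hn1 : (0:ℝ) < (n:ℝ)+1 := by positivity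
    calc shearWP (n+3)^2 = |shearWP (n+3)|^2 := (sq_abs _).symm
      _ ≤ (18/(((n+3:ℕ)):ℝ))^2 := pow_le_pow_left₀ (abs_nonneg _) habs 2
      _ = 324/(((n+3:ℕ)):ℝ)^2 := by rw [div_pow]; norm_num
      _ ≤ 324/((n:ℝ)+1)^2 := by
          rw [hc]
          gcongr
          · linarith [Nat.cast_nonneg (α := ℝ) n]
      _ = 324 * (1/((n:ℝ)+1)^2) := by ring
  · have hpos : ∀ n : ℕ, 0 ≤ shearWP (n+3) := by
      intro n; rw [shear_eq]; exact (shear_pos (hcast n)).le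
    rw [← not_summable_iff_tendsto_nat_atTop_of_nonneg hpos]
    intro hS
    apply ff_not_summable
    rw [← summable_nat_add_iff 3]
    have hsum50 : Summable (fun n : ℕ => 50/(((n+3:ℕ)):ℝ)^2) := by
      apply Summable.of_nonneg_of_le (fun n => by positivity) _ (base_summable.mul_left 50)
      intro n
      have hc : (((n+3:ℕ)):ℝ) = (n:ℝ)+3 := by push_cast; ring
      rw [hc]
      calc 50/((n:ℝ)+3)^2 ≤ 50/((n:ℝ)+1)^2 := by
            gcongr
            · linarith [Nat.cast_nonneg (α := ℝ) n]
        _ = 50 * (1/((n:ℝ)+1)^2) := by ring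
    apply Summable.of_nonneg_of_le (fun n => ff_nonneg _) _ (hS.add hsum50)
    intro n
    have ht := hcast n
    have ht0 : (0:ℝ) < (((n+3:ℕ)):ℝ) := by linarith
    have hL := log_ge_one ht
    have h := (abs_le.mp (shear_est ht)).1
    have h1 : ff (n+3) ≤ 1/((((n+3:ℕ)):ℝ)*Real.log (((n+3:ℕ)):ℝ)) := by
      rw [ff]
      apply one_div_le_one_div_of_le (by positivity)
      nlinarith
    rw [shear_eq]
    linarith
end
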